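/- arXiv:1804.03069 — 7 statements merged into one kernel-verified Lean document; each statement's English description precedes it below -/
import Mathlib

section
/- For every integer k ≥ 2, uniformly for x in [0, m^{-α}] where α = (1/2)(1/k + 1/(k+1)), we have (Γ(k,x)/Γ(k))^m = (1 + O(m^{-1/(2k)})) · exp(-m x^k / k!), where Γ(k,x) is the upper incomplete gamma function. More precisely, there exists a constant C depending only on k such that for all m ≥ 1 and all x ∈ [0, m^{-α}], |(Γ(k,x)/Γ(k))^m · exp(m x^k / k!) - 1| ≤ C m^{-1/(2k)}. -/
open MeasureTheory Real Set

/-- The upper incomplete gamma function `Γ(k,x) = ∫_x^∞ t^{k-1} e^{-t} dt`. -/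
noncomputable def upperGamma (k : ℕ) (x : ℝ) : ℝ :=
  ∫ t in Set.Ioi x, t ^ (k - 1) * Real.exp (-t)

lemma ug_integrableOn (k : ℕ) (hk : 1 ≤ k) {x : ℝ} (hx : 0 ≤ x) :
    IntegrableOn (fun t : ℝ => t ^ (k - 1) * Real.exp (-t)) (Set.Ioi x) := by
  have hk0 : (0 : ℝ) < k := by exact_mod_cast Nat.lt_of_lt_of_le Nat.zero_lt_one hk
  have h0 := Real.GammaIntegral_convergent hk0
  have h1 : IntegrableOn (fun t : ℝ => t ^ (k - 1) * Real.exp (-t)) (Set.Ioi 0) := by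
    refine h0.congr_fun (fun t ht => ?_) measurableSet_Ioi
    rw [mul_comm]
    congr 1
    beta_reduce
    rw [show (k : ℝ) - 1 = ((k - 1 : ℕ) : ℝ) by rw [Nat.cast_sub hk]; push_cast; ring,
      Real.rpow_natCast]
  exact h1.mono_set (Set.Ioi_subset_Ioi hx)

lemma upperGamma_zero (k : ℕ) (hk : 1 ≤ k) :
    upperGamma k 0 = (Nat.factorial (k - 1) : ℝ) := by
  have hk0 : (0 : ℝ) < k := by exact_mod_cast Nat.lt_of_lt_of_le Nat.zero_lt_one hk
  have h1 : upperGamma k 0 = Real.Gamma k := by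
    rw [Real.Gamma_eq_integral hk0, upperGamma]
    refine setIntegral_congr_fun measurableSet_Ioi (fun t ht => ?_)
    rw [mul_comm]
    congr 1
    beta_reduce
    rw [show (k : ℝ) - 1 = ((k - 1 : ℕ) : ℝ) by rw [Nat.cast_sub hk]; push_cast; ring,
      Real.rpow_natCast]
  rw [h1, show (k : ℝ) = ((k - 1 : ℕ) : ℝ) + 1 by rw [Nat.cast_sub hk]; push_cast; ring,
    Real.Gamma_nat_eq_factorial]

lemma upperGamma_split (k : ℕ) (hk : 1 ≤ k) {x : ℝ} (hx : 0 ≤ x) :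
    upperGamma k x = (Nat.factorial (k - 1) : ℝ)
      - ∫ t in (0:ℝ)..x, t ^ (k - 1) * Real.exp (-t) := by
  have hIoi := ug_integrableOn k hk hx
  have hIoc : IntegrableOn (fun t : ℝ => t ^ (k - 1) * Real.exp (-t)) (Set.Ioc 0 x) :=
    (ug_integrableOn k hk le_rfl).mono_set Set.Ioc_subset_Ioi_self
  have hsplit : (∫ t in Set.Ioc 0 x, t ^ (k - 1) * Real.exp (-t))
      + (∫ t in Set.Ioi x, t ^ (k - 1) * Real.exp (-t))
      = ∫ t in Set.Ioi (0:ℝ), t ^ (k - 1) * Real.exp (-t) := by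
    rw [← setIntegral_union (Set.Ioc_disjoint_Ioi le_rfl) measurableSet_Ioi hIoc hIoi,
      Set.Ioc_union_Ioi_eq_Ioi hx]
  have h0 := upperGamma_zero k hk
  rw [upperGamma] at h0 ⊢
  rw [intervalIntegral.integral_of_le hx]
  linarith

lemma lowerInc_bounds (k : ℕ) (hk : 1 ≤ k) {x : ℝ} (hx0 : 0 ≤ x) :
    x ^ k / k - x ^ (k + 1) / (k + 1) ≤ (∫ t in (0:ℝ)..x, t ^ (k - 1) * Real.exp (-t)) ∧
    (∫ t in (0:ℝ)..x, t ^ (k - 1) * Real.exp (-t)) ≤ x ^ k / k := by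
  have hcont : Continuous fun t : ℝ => t ^ (k - 1) * Real.exp (-t) := by
    fun_prop
  have hf : IntervalIntegrable (fun t : ℝ => t ^ (k - 1) * Real.exp (-t)) volume 0 x :=
    hcont.intervalIntegrable 0 x
  have hks : k - 1 + 1 = k := Nat.sub_add_cancel hk
  have hkc : ((k - 1 : ℕ) : ℝ) + 1 = (k : ℝ) := by rw [Nat.cast_sub hk]; push_cast; ring
  constructor
  · have hle : (∫ t in (0:ℝ)..x, (t ^ (k - 1) - t ^ k))
        ≤ ∫ t in (0:ℝ)..x, t ^ (k - 1) * Real.exp (-t) := by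
      refine intervalIntegral.integral_mono_on hx0
        (((continuous_pow _).sub (continuous_pow _)).intervalIntegrable 0 x) hf (fun t ht => ?_)
      have ht0 : 0 ≤ t := ht.1
      have h1 : 1 - t ≤ Real.exp (-t) := by
        have := Real.add_one_le_exp (-t); linarith
      have h2 : t ^ (k - 1) * (1 - t) ≤ t ^ (k - 1) * Real.exp (-t) :=
        mul_le_mul_of_nonneg_left h1 (by positivity)
      calc t ^ (k - 1) - t ^ k = t ^ (k - 1) * (1 - t) := by
            rw [mul_sub, mul_one, mul_comm, ← pow_succ', hks]
        _ ≤ _ := h2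
    have hcalc : (∫ t in (0:ℝ)..x, (t ^ (k - 1) - t ^ k))
        = x ^ k / k - x ^ (k + 1) / (k + 1) := by
      rw [intervalIntegral.integral_sub ((continuous_pow _).intervalIntegrable 0 x)
        ((continuous_pow _).intervalIntegrable 0 x), integral_pow, integral_pow, hks,
        zero_pow (show k ≠ 0 by omega), zero_pow (show k + 1 ≠ 0 by omega)]
      push_cast [hkc]
      ring
    linarith
  · have hle : (∫ t in (0:ℝ)..x, t ^ (k - 1) * Real.exp (-t))
        ≤ ∫ t in (0:ℝ)..x, t ^ (k - 1) := by
      refine intervalIntegral.integral_mono_on hx0 hf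
        ((continuous_pow _).intervalIntegrable 0 x) (fun t ht => ?_)
      have ht0 : 0 ≤ t := ht.1
      have h1 : Real.exp (-t) ≤ 1 := Real.exp_le_one_iff.mpr (by linarith)
      calc t ^ (k - 1) * Real.exp (-t) ≤ t ^ (k - 1) * 1 :=
            mul_le_mul_of_nonneg_left h1 (by positivity)
        _ = t ^ (k - 1) := mul_one _
    have hcalc : (∫ t in (0:ℝ)..x, t ^ (k - 1)) = x ^ k / k := by
      rw [integral_pow, hks, zero_pow (show k ≠ 0 by omega)]
      push_cast [hkc]
      ring
    linarith

lemma exp_est {E y : ℝ} (hy0 : 0 < y) (hEub : E ≤ y) (hElb : -(2 * y) ≤ E)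
    (hE2 : E ≤ 2) : |Real.exp E - 1| ≤ 3 * Real.exp 3 * y := by
  have hexp3pos : (0:ℝ) < Real.exp 3 := Real.exp_pos 3
  have hexp23 : Real.exp 2 ≤ Real.exp 3 := Real.exp_le_exp.mpr (by norm_num)
  rcases le_or_gt 0 E with hE0 | hE0
  · have h1 : 1 ≤ Real.exp E := Real.one_le_exp hE0
    rw [abs_of_nonneg (by linarith)]
    have h2 : Real.exp E - 1 ≤ E * Real.exp E := by
      have h := Real.add_one_le_exp (-E)
      rw [Real.exp_neg] at h
      have h3 : (0:ℝ) < Real.exp E := Real.exp_pos E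
      have h4 : (-E + 1) * Real.exp E ≤ 1 := by
        calc (-E + 1) * Real.exp E ≤ (Real.exp E)⁻¹ * Real.exp E :=
              mul_le_mul_of_nonneg_right h h3.le
          _ = 1 := inv_mul_cancel₀ h3.ne'
      nlinarith
    have h5 : Real.exp E ≤ Real.exp 2 := Real.exp_le_exp.mpr hE2
    have h6 : E * Real.exp E ≤ y * Real.exp 2 :=
      mul_le_mul (by linarith) h5 (Real.exp_pos E).le (by linarith)
    nlinarith
  · have h1 : Real.exp E ≤ 1 := Real.exp_le_one_iff.mpr hE0.le
    rw [abs_of_nonpos (by linarith)]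
    have h2 : 1 - Real.exp E ≤ -E := by
      have h := Real.add_one_le_exp E
      linarith
    have h3 : (1:ℝ) ≤ Real.exp 3 := Real.one_le_exp (by norm_num)
    nlinarith

set_option maxHeartbeats 2000000 in
theorem stmt0 (k : ℕ) (hk : 2 ≤ k) :
    ∃ C : ℝ, ∀ m : ℕ, 1 ≤ m →
      ∀ x ∈ Set.Icc (0 : ℝ) ((m : ℝ) ^ (-((1 : ℝ) / 2 * (1 / k + 1 / (k + 1))))),
        |(upperGamma k x / (Nat.factorial (k - 1) : ℝ)) ^ m *
            Real.exp ((m : ℝ) * x ^ k / (Nat.factorial k : ℝ)) - 1|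
          ≤ C * (m : ℝ) ^ (-(1 / (2 * (k : ℝ)))) := by
  have hk1 : 1 ≤ k := le_trans one_le_two hk
  have hkR : (2 : ℝ) ≤ (k : ℝ) := by exact_mod_cast hk
  refine ⟨3 * Real.exp 3, ?_⟩
  intro m hm x hx
  obtain ⟨hx0, hxu⟩ := hx
  set α : ℝ := (1 : ℝ) / 2 * (1 / k + 1 / (k + 1)) with hαdef
  have hmR : (1 : ℝ) ≤ (m : ℝ) := by exact_mod_cast hm
  have hm0 : (0 : ℝ) < m := by linarith
  have hα0 : 0 < α := by
    rw [hαdef]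
    have : (0:ℝ) < (k:ℝ) + 1 := by linarith
    positivity
  have hub1 : (m : ℝ) ^ (-α) ≤ 1 :=
    Real.rpow_le_one_of_one_le_of_nonpos hmR (by linarith)
  have hx1 : x ≤ 1 := hxu.trans hub1
  set y : ℝ := (m : ℝ) ^ (-(1 / (2 * (k : ℝ)))) with hydef
  have hy0 : 0 < y := Real.rpow_pos_of_pos hm0 _
  have hy1 : y ≤ 1 := Real.rpow_le_one_of_one_le_of_nonpos hmR
    (neg_nonpos.mpr (by positivity))
  -- factorial facts
  have hfac0 : (0 : ℝ) < (Nat.factorial (k - 1) : ℝ) := by positivity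
  have hfack : (Nat.factorial k : ℝ) = (k : ℝ) * (Nat.factorial (k - 1) : ℝ) := by
    rw [← Nat.mul_factorial_pred (by omega : k ≠ 0)]; push_cast; ring
  have hfac2 : (2 : ℝ) ≤ (Nat.factorial k : ℝ) := by
    exact_mod_cast Nat.factorial_le hk
  have hfac1 : (1 : ℝ) ≤ (Nat.factorial (k - 1) : ℝ) := by
    exact_mod_cast Nat.one_le_iff_ne_zero.mpr (Nat.factorial_ne_zero _)
  -- definitions
  obtain ⟨hγlo, hγhi⟩ := lowerInc_bounds k hk1 hx0
  have hγ0' : 0 ≤ ∫ t in (0:ℝ)..x, t ^ (k - 1) * Real.exp (-t) :=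
    intervalIntegral.integral_nonneg hx0
      (fun t ht => mul_nonneg (pow_nonneg ht.1 _) (Real.exp_nonneg _))
  set γ := ∫ t in (0:ℝ)..x, t ^ (k - 1) * Real.exp (-t) with hγdef
  have hγ0 : 0 ≤ γ := hγ0'
  clear_value γ
  set p : ℝ := γ / (Nat.factorial (k - 1) : ℝ) with hpdef
  set A : ℝ := x ^ k / (Nat.factorial k : ℝ) with hAdef
  have hp0 : 0 ≤ p := div_nonneg hγ0 hfac0.le
  have hpA : p ≤ A := by
    rw [hpdef, hAdef, hfack, div_le_div_iff₀ hfac0 (by positivity)]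
    have hkpos : (0:ℝ) < k := by linarith
    calc γ * ((k:ℝ) * (Nat.factorial (k-1) : ℝ)) ≤ (x ^ k / k) * ((k:ℝ) * (Nat.factorial (k-1) : ℝ)) := by
          apply mul_le_mul_of_nonneg_right hγhi (by positivity)
      _ = x ^ k * (Nat.factorial (k-1) : ℝ) := by
          field_simp
  have hA1 : A ≤ 1 / 2 := by
    rw [hAdef, div_le_iff₀ (by linarith)]
    have : x ^ k ≤ 1 := pow_le_one₀ hx0 hx1
    nlinarith
  have hp12 : p ≤ 1 / 2 := hpA.trans hA1
  have hApB : A - p ≤ x ^ (k + 1) := by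
    have h1 : x ^ k / k - γ ≤ x ^ (k + 1) / (k + 1) := by linarith
    have h2 : A - p = (x ^ k / k - γ) / (Nat.factorial (k - 1) : ℝ) := by
      rw [hAdef, hpdef, hfack]
      field_simp
    rw [h2]
    calc (x ^ k / k - γ) / (Nat.factorial (k - 1) : ℝ)
        ≤ (x ^ (k + 1) / (k + 1)) / (Nat.factorial (k - 1) : ℝ) := by
          gcongr
      _ ≤ x ^ (k + 1) := by
          rw [div_div]
          apply div_le_self (by positivity)
          nlinarith
  have hkne : (k:ℝ) ≠ 0 := by linarith
  have hk1ne : (k:ℝ) + 1 ≠ 0 := by linarith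
  -- F = 1 - p
  have hF : upperGamma k x / (Nat.factorial (k - 1) : ℝ) = 1 - p := by
    rw [upperGamma_split k hk1 hx0, hpdef, ← hγdef, sub_div, div_self hfac0.ne']
  have hF0 : (0:ℝ) < 1 - p := by linarith
  -- log bounds
  set L := Real.log (1 - p) with hLdef
  have hL1 : L ≤ -p := by
    have := Real.log_le_sub_one_of_pos hF0; linarith
  have hL2 : -p - 2 * p ^ 2 ≤ L := by
    have h1 := Real.log_le_sub_one_of_pos (inv_pos.mpr hF0)
    rw [Real.log_inv] at h1
    have h2 : (1 - p)⁻¹ ≤ 1 + p + 2 * p ^ 2 := by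
      rw [inv_eq_one_div, div_le_iff₀ hF0]
      nlinarith [mul_nonneg (mul_nonneg hp0 hp0) (show (0:ℝ) ≤ 1 - 2 * p by linarith)]
    linarith
  -- the exponent
  set E : ℝ := (m:ℝ) * (A + L) with hEdef
  have hexpE : (1 - p) ^ m * Real.exp ((m:ℝ) * x ^ k / (Nat.factorial k : ℝ))
      = Real.exp E := by
    rw [← Real.exp_log hF0, ← Real.exp_nat_mul, ← Real.exp_add, ← hLdef]
    congr 1
    rw [hEdef, hAdef]; ring
  -- rpow estimates
  have hpow1 : ∀ n : ℕ, (m:ℝ) * x ^ n ≤ (m:ℝ) ^ (1 + -α * (n:ℝ)) := by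
    intro n
    have h1 : x ^ n ≤ ((m:ℝ) ^ (-α)) ^ n := pow_le_pow_left₀ hx0 hxu n
    have h2 : ((m:ℝ) ^ (-α)) ^ n = (m:ℝ) ^ (-α * (n:ℝ)) := by
      rw [← Real.rpow_natCast ((m:ℝ) ^ (-α)) n, ← Real.rpow_mul hm0.le]
    have h3 : (m:ℝ) * (m:ℝ) ^ (-α * (n:ℝ)) = (m:ℝ) ^ (1 + -α * (n:ℝ)) := by
      rw [Real.rpow_add hm0, Real.rpow_one]
    calc (m:ℝ) * x ^ n ≤ (m:ℝ) * ((m:ℝ) ^ (-α)) ^ n := by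
          exact mul_le_mul_of_nonneg_left h1 hm0.le
      _ = (m:ℝ) ^ (1 + -α * (n:ℝ)) := by rw [h2, h3]
  have key1 : (m:ℝ) * x ^ (k + 1) ≤ y := by
    have h := hpow1 (k + 1)
    have h4 : 1 + -α * ((k + 1 : ℕ):ℝ) = -(1 / (2 * (k:ℝ))) := by
      rw [hαdef]; push_cast; field_simp; ring
    rw [h4] at h
    exact h.trans_eq hydef.symm
  have key2 : (m:ℝ) * x ^ (2 * k) ≤ y := by
    have h := hpow1 (2 * k)
    have h4 : 1 + -α * ((2 * k : ℕ):ℝ) = -((k:ℝ) / ((k:ℝ) + 1)) := by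
      rw [hαdef]; push_cast; field_simp; ring
    rw [h4] at h
    have h5 : (m:ℝ) ^ (-((k:ℝ) / ((k:ℝ) + 1))) ≤ (m:ℝ) ^ (-(1 / (2 * (k:ℝ)))) := by
      apply Real.rpow_le_rpow_of_exponent_le hmR
      rw [neg_le_neg_iff, div_le_div_iff₀ (by linarith) (by linarith)]
      nlinarith
    exact h.trans (h5.trans_eq hydef.symm)
  -- bound on m * p^2
  have hmp2 : (m:ℝ) * p ^ 2 ≤ y := by
    have hAx : A ≤ x ^ k := by
      rw [hAdef]
      exact div_le_self (by positivity) (by linarith)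
    have h1 : p ^ 2 ≤ x ^ (2 * k) := by
      have : p ^ 2 ≤ (x ^ k) ^ 2 := pow_le_pow_left₀ hp0 (hpA.trans hAx) 2
      calc p ^ 2 ≤ (x ^ k) ^ 2 := this
        _ = x ^ (2 * k) := by rw [← pow_mul, mul_comm]
    calc (m:ℝ) * p ^ 2 ≤ (m:ℝ) * x ^ (2 * k) := mul_le_mul_of_nonneg_left h1 hm0.le
      _ ≤ y := key2
  -- bounds on E
  have hEub : E ≤ y := by
    have h1 : A + L ≤ x ^ (k + 1) := by linarith
    calc E ≤ (m:ℝ) * x ^ (k + 1) := mul_le_mul_of_nonneg_left h1 hm0.le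
      _ ≤ y := key1
  have hElb : -(2 * y) ≤ E := by
    have h1 : -(2 * p ^ 2) ≤ A + L := by linarith
    have h2 : (m:ℝ) * -(2 * p ^ 2) ≤ E := mul_le_mul_of_nonneg_left h1 hm0.le
    linarith
  have hEabs : |E| ≤ 2 * y := abs_le.mpr ⟨hElb, by linarith⟩
  have hE2 : E ≤ 2 := by linarith
  rw [hF, hexpE]
  exact exp_est hy0 hEub hElb hE2
end

section
/- For a > 0, b > 0 and integer k ≥ 2, with ξ_k(a,b) = ∫_0^∞ ∫_y^∞ exp(-a x^k/k! - b y^k/k!) dx dy, the normalized quantity (k / (Γ(2/k)(k!)^{2/k})) · ξ_k(a,b) satisfies the two-sided bound (a+b)^{-2/k} ≤ (k / (Γ(2/k)(k!)^{2/k})) ξ_k(a,b) ≤ a^{-2/k} + b^{-2/k}. -/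
open MeasureTheory Real Set

/-- `ξ_k(a,b) = ∫_0^∞ ∫_y^∞ exp(-a x^k/k! - b y^k/k!) dx dy`. -/
noncomputable def xiInt (k : ℕ) (a b : ℝ) : ℝ :=
  ∫ y in Set.Ioi (0 : ℝ), ∫ x in Set.Ioi y,
    Real.exp (-a * x ^ k / (Nat.factorial k : ℝ) - b * y ^ k / (Nat.factorial k : ℝ))

lemma stmt4_swap (h : ℝ → ENNReal) (hm : Measurable h) :
    ∫⁻ y in Ioi (0:ℝ), ∫⁻ x in Ioi y, h x
      = ∫⁻ x in Ioi (0:ℝ), ENNReal.ofReal x * h x := by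
  have key : ∫⁻ y in Ioi (0:ℝ), ∫⁻ x in Ioi y, h x
      = ∫⁻ y in Ioi (0:ℝ), ∫⁻ x in Ioi (0:ℝ), (Ioi y).indicator h x := by
    refine setLIntegral_congr_fun measurableSet_Ioi ?_
    intro y hy
    dsimp only
    rw [lintegral_indicator measurableSet_Ioi, Measure.restrict_restrict measurableSet_Ioi,
      Set.Ioi_inter_Ioi, sup_eq_left.mpr hy.le]
  rw [key, lintegral_lintegral_swap]
  · refine setLIntegral_congr_fun measurableSet_Ioi ?_
    intro x hx
    dsimp only
    have e : ∀ y : ℝ, (Ioi y).indicator h x = (Iio x).indicator (fun _ => h x) y := by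
      intro y
      by_cases hyx : y < x <;> simp [Set.indicator_apply, hyx]
    simp_rw [e]
    rw [lintegral_indicator measurableSet_Iio, setLIntegral_const,
      Measure.restrict_apply measurableSet_Iio,
      show Iio x ∩ Ioi 0 = Ioo 0 x from by ext t; simp [and_comm],
      Real.volume_Ioo, sub_zero, mul_comm]
  · have e : (Function.uncurry fun (y x : ℝ) => (Ioi y).indicator h x)
        = {p : ℝ × ℝ | p.1 < p.2}.indicator (fun p => h p.2) := by
      funext p
      by_cases hp : p.1 < p.2 <;>
        simp [Function.uncurry, Set.indicator_apply, hp]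
    rw [e]
    exact ((hm.comp measurable_snd).indicator
      (measurableSet_lt measurable_fst measurable_snd)).aemeasurable

lemma stmt4_integrable (k : ℕ) (hk : 2 ≤ k) {c : ℝ} (hc : 0 < c) :
    IntegrableOn (fun x : ℝ => x * Real.exp (-c * x ^ k / (Nat.factorial k : ℝ)))
      (Ioi 0) := by
  have hK : (0:ℝ) < (Nat.factorial k : ℝ) := by positivity
  have h1k : (1:ℝ) ≤ (k:ℝ) := by exact_mod_cast (by omega : 1 ≤ k)
  have h := integrableOn_rpow_mul_exp_neg_mul_rpow (p := (k:ℝ)) (s := 1)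
    (by norm_num) (by linarith) (div_pos hc hK)
  refine h.congr_fun (fun x hx => ?_) measurableSet_Ioi
  dsimp only
  rw [rpow_one, rpow_natCast]
  ring_nf

lemma stmt4_integral (k : ℕ) (hk : 2 ≤ k) {c : ℝ} (hc : 0 < c) :
    ∫ x in Ioi (0:ℝ), x * Real.exp (-c * x ^ k / (Nat.factorial k : ℝ))
      = (Real.Gamma (2 / k) * (Nat.factorial k : ℝ) ^ ((2:ℝ)/k) / k)
          * c ^ (-((2:ℝ)/k)) := by
  have hK : (0:ℝ) < (Nat.factorial k : ℝ) := by positivity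
  have hk0 : (0:ℝ) < (k:ℝ) := by exact_mod_cast (by omega : 0 < k)
  have h := integral_rpow_mul_exp_neg_mul_rpow (p := (k:ℝ)) (q := 1)
    (b := c / (Nat.factorial k : ℝ)) hk0 (by norm_num) (div_pos hc hK)
  have h2 : ((1:ℝ)+1) = 2 := by norm_num
  rw [h2] at h
  rw [show (∫ x in Ioi (0:ℝ), x * Real.exp (-c * x ^ k / (Nat.factorial k : ℝ)))
      = ∫ x in Ioi (0:ℝ), x ^ (1:ℝ) *
          Real.exp (-(c / (Nat.factorial k : ℝ)) * x ^ (k:ℝ)) from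
    setIntegral_congr_fun measurableSet_Ioi (fun x hx => by
      rw [rpow_one, rpow_natCast]; ring_nf), h]
  rw [neg_div, div_rpow hc.le hK.le, Real.rpow_neg hK.le, div_eq_mul_inv, inv_inv]
  ring

lemma stmt4_lintegral (k : ℕ) (hk : 2 ≤ k) {c : ℝ} (hc : 0 < c) :
    ∫⁻ x in Ioi (0:ℝ), ENNReal.ofReal x *
        ENNReal.ofReal (Real.exp (-c * x ^ k / (Nat.factorial k : ℝ)))
      = ENNReal.ofReal ((Real.Gamma (2 / k) * (Nat.factorial k : ℝ) ^ ((2:ℝ)/k) / k)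
          * c ^ (-((2:ℝ)/k))) := by
  rw [← stmt4_integral k hk hc, ofReal_integral_eq_lintegral_ofReal
      (stmt4_integrable k hk hc)
      ((ae_restrict_iff' measurableSet_Ioi).mpr (ae_of_all _ fun x hx =>
        mul_nonneg (le_of_lt hx) (Real.exp_pos _).le))]
  refine setLIntegral_congr_fun measurableSet_Ioi ?_
  intro x hx
  dsimp only
  rw [← ENNReal.ofReal_mul (le_of_lt hx)]

lemma stmt4_exp_integrable (k : ℕ) (hk : 2 ≤ k) {c : ℝ} (hc : 0 < c) :
    IntegrableOn (fun x : ℝ => Real.exp (-c * x ^ k / (Nat.factorial k : ℝ)))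
      (Ioi 0) := by
  have hK : (0:ℝ) < (Nat.factorial k : ℝ) := by positivity
  have h1k : (1:ℝ) ≤ (k:ℝ) := by exact_mod_cast (by omega : 1 ≤ k)
  have h := integrableOn_rpow_mul_exp_neg_mul_rpow (p := (k:ℝ)) (s := 0)
    (by norm_num) (by linarith) (div_pos hc hK)
  refine h.congr_fun (fun x hx => ?_) measurableSet_Ioi
  dsimp only
  rw [rpow_zero, one_mul, rpow_natCast]
  ring_nf

theorem stmt4 (k : ℕ) (hk : 2 ≤ k) (a b : ℝ) (ha : 0 < a) (hb : 0 < b) :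
    (a + b) ^ (-(2 : ℝ) / k)
        ≤ (k : ℝ) / (Real.Gamma (2 / k) * (Nat.factorial k : ℝ) ^ ((2 : ℝ) / k)) * xiInt k a b
      ∧ (k : ℝ) / (Real.Gamma (2 / k) * (Nat.factorial k : ℝ) ^ ((2 : ℝ) / k)) * xiInt k a b
        ≤ a ^ (-(2 : ℝ) / k) + b ^ (-(2 : ℝ) / k) := by
  have hK : (0:ℝ) < (Nat.factorial k : ℝ) := by positivity
  have hkR : (0:ℝ) < (k:ℝ) := by exact_mod_cast (by omega : 0 < k)
  have hG : 0 < Real.Gamma (2 / k) := Real.Gamma_pos_of_pos (by positivity)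
  set C : ℝ := Real.Gamma (2 / k) * (Nat.factorial k : ℝ) ^ ((2:ℝ)/k) / k with hC_def
  set I : ℝ → ENNReal := fun y => ∫⁻ x in Ioi y,
    ENNReal.ofReal (Real.exp (-a * x ^ k / (Nat.factorial k : ℝ)
      - b * y ^ k / (Nat.factorial k : ℝ))) with hI_def
  set L : ENNReal := ∫⁻ y in Ioi (0:ℝ), I y with hL_def
  -- measurability of I
  set G : ℝ × ℝ → ENNReal := {p : ℝ × ℝ | p.1 < p.2}.indicator
      (fun p => ENNReal.ofReal (Real.exp (-a * p.2 ^ k / (Nat.factorial k : ℝ)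
        - b * p.1 ^ k / (Nat.factorial k : ℝ)))) with hG_def
  have hGm : Measurable G := by
    refine Measurable.indicator ?_ (measurableSet_lt measurable_fst measurable_snd)
    fun_prop
  have hI_eq : ∀ y, I y = ∫⁻ x, G (y, x) := by
    intro y
    rw [hI_def]
    simp only
    rw [← lintegral_indicator measurableSet_Ioi]
    refine lintegral_congr fun x => ?_
    by_cases hxy : y < x <;> simp [hG_def, Set.indicator_apply, hxy]
  have hI_meas : Measurable I := by
    have : I = fun y => ∫⁻ x, G (y, x) := funext hI_eq
    rw [this]
    exact hGm.lintegral_prod_right'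
  -- finiteness bound for I
  have hJa : ∫⁻ x in Ioi (0:ℝ), ENNReal.ofReal
      (Real.exp (-a * x ^ k / (Nat.factorial k : ℝ))) ≠ ⊤ := by
    rw [← ofReal_integral_eq_lintegral_ofReal (stmt4_exp_integrable k hk ha)
      (ae_of_all _ fun x => (Real.exp_pos _).le)]
    exact ENNReal.ofReal_ne_top
  have hI_fin : ∀ y : ℝ, 0 < y → I y ≠ ⊤ := by
    intro y hy
    have h1 : I y ≤ ∫⁻ x in Ioi y, ENNReal.ofReal
        (Real.exp (-a * x ^ k / (Nat.factorial k : ℝ))) := by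
      refine lintegral_mono fun x => ENNReal.ofReal_le_ofReal (Real.exp_le_exp.mpr ?_)
      have : 0 ≤ b * y ^ k / (Nat.factorial k : ℝ) := by positivity
      linarith
    have h2 := lintegral_mono_set (μ := volume)
      (f := fun x : ℝ => ENNReal.ofReal (Real.exp (-a * x ^ k / (Nat.factorial k : ℝ))))
      (Ioi_subset_Ioi hy.le)
    exact ne_top_of_le_ne_top hJa (h1.trans h2)
  -- xiInt = L.toReal
  have cont : ∀ y : ℝ, Continuous fun x : ℝ =>
      Real.exp (-a * x ^ k / (Nat.factorial k : ℝ)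
        - b * y ^ k / (Nat.factorial k : ℝ)) := fun y => by fun_prop
  have hxi : xiInt k a b = L.toReal := by
    rw [xiInt]
    have inner_eq : ∀ y : ℝ, (∫ x in Ioi y,
        Real.exp (-a * x ^ k / (Nat.factorial k : ℝ)
          - b * y ^ k / (Nat.factorial k : ℝ))) = (I y).toReal := fun y =>
      integral_eq_lintegral_of_nonneg_ae (ae_of_all _ fun x => (Real.exp_pos _).le)
        (cont y).aestronglyMeasurable
    simp_rw [inner_eq]
    rw [integral_eq_lintegral_of_nonneg_ae
      (ae_of_all _ fun y => ENNReal.toReal_nonneg)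
      hI_meas.ennreal_toReal.aestronglyMeasurable]
    congr 1
    refine setLIntegral_congr_fun measurableSet_Ioi ?_
    intro y hy
    exact ENNReal.ofReal_toReal (hI_fin y hy)
  -- lower bound for L
  have hlow : ENNReal.ofReal (C * (a + b) ^ (-((2:ℝ)/k))) ≤ L := by
    rw [← stmt4_lintegral k hk (by linarith : 0 < a + b),
      ← stmt4_swap _ (by fun_prop)]
    refine lintegral_mono_ae ?_
    filter_upwards [ae_restrict_mem measurableSet_Ioi] with y hy
    refine lintegral_mono_ae ?_
    filter_upwards [ae_restrict_mem measurableSet_Ioi] with x hx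
    refine ENNReal.ofReal_le_ofReal (Real.exp_le_exp.mpr ?_)
    have hyx : y ≤ x := le_of_lt hx
    have hy0 : (0:ℝ) ≤ y := le_of_lt hy
    have hpow : y ^ k ≤ x ^ k := pow_le_pow_left₀ hy0 hyx k
    have hdiv : b * y ^ k / (Nat.factorial k : ℝ) ≤ b * x ^ k / (Nat.factorial k : ℝ) := by
      gcongr
    calc -(a + b) * x ^ k / (Nat.factorial k : ℝ)
        = -a * x ^ k / (Nat.factorial k : ℝ) - b * x ^ k / (Nat.factorial k : ℝ) := by ring
      _ ≤ -a * x ^ k / (Nat.factorial k : ℝ) - b * y ^ k / (Nat.factorial k : ℝ) := by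
          linarith
  -- upper bound for L
  have hup : L ≤ ENNReal.ofReal (C * a ^ (-((2:ℝ)/k))) := by
    rw [← stmt4_lintegral k hk ha, ← stmt4_swap _ (by fun_prop)]
    refine lintegral_mono_ae ?_
    filter_upwards [ae_restrict_mem measurableSet_Ioi] with y hy
    refine lintegral_mono fun x => ?_
    refine ENNReal.ofReal_le_ofReal (Real.exp_le_exp.mpr ?_)
    have hy0 : (0:ℝ) < y := hy
    have : 0 ≤ b * y ^ k / (Nat.factorial k : ℝ) := by positivity
    linarith
  have hL_ne : L ≠ ⊤ := ne_top_of_le_ne_top ENNReal.ofReal_ne_top hup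
  have hC_pos : 0 < C := by
    rw [hC_def]
    exact div_pos (mul_pos hG (rpow_pos_of_pos hK _)) hkR
  have hxi_low : C * (a + b) ^ (-((2:ℝ)/k)) ≤ xiInt k a b := by
    rw [hxi]
    have := ENNReal.toReal_mono hL_ne hlow
    rwa [ENNReal.toReal_ofReal (by positivity)] at this
  have hxi_up : xiInt k a b ≤ C * a ^ (-((2:ℝ)/k)) := by
    rw [hxi]
    have := ENNReal.toReal_mono ENNReal.ofReal_ne_top hup
    rwa [ENNReal.toReal_ofReal (by positivity)] at this
  have hfactor : ∀ t : ℝ,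
      (k : ℝ) / (Real.Gamma (2 / k) * (Nat.factorial k : ℝ) ^ ((2:ℝ)/k)) * (C * t)
        = t := by
    intro t
    rw [hC_def]
    field_simp
  have hpos : 0 < (k : ℝ) / (Real.Gamma (2 / k) * (Nat.factorial k : ℝ) ^ ((2:ℝ)/k)) :=
    div_pos hkR (mul_pos hG (rpow_pos_of_pos hK _))
  simp only [neg_div]
  constructor
  · rw [← hfactor ((a + b) ^ (-((2:ℝ)/k)))]
    exact mul_le_mul_of_nonneg_left hxi_low hpos.le
  · calc (k : ℝ) / (Real.Gamma (2 / k) * (Nat.factorial k : ℝ) ^ ((2:ℝ)/k)) * xiInt k a b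
        ≤ (k : ℝ) / (Real.Gamma (2 / k) * (Nat.factorial k : ℝ) ^ ((2:ℝ)/k))
            * (C * a ^ (-((2:ℝ)/k))) := mul_le_mul_of_nonneg_left hxi_up hpos.le
      _ = a ^ (-((2:ℝ)/k)) := hfactor _
      _ ≤ a ^ (-((2:ℝ)/k)) + b ^ (-((2:ℝ)/k)) :=
          le_add_of_nonneg_right (Real.rpow_nonneg hb.le _)
end

section
/- ∫_0^1 ∫_0^{1-s} (arctan(√(t/s)) / √(st)) dt ds = π²/4. -/
open MeasureTheory Real Set

/-- Inner integral computation. -/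
lemma stmt6_inner {s : ℝ} (hs : s ∈ Set.Ioo (0 : ℝ) 1) :
    (∫ t in Set.Ioo (0 : ℝ) (1 - s),
        Real.arctan (Real.sqrt (t / s)) / Real.sqrt (s * t))
      = 2 * (Real.sqrt ((1 - s) / s) * Real.arctan (Real.sqrt ((1 - s) / s)))
          + Real.log s := by
  obtain ⟨hs0, hs1⟩ := hs
  have h1s : (0 : ℝ) < 1 - s := by linarith
  set f : ℝ → ℝ := fun t => 2 * (Real.sqrt (t / s) * Real.arctan (Real.sqrt (t / s)))
      - Real.log (1 + t / s) with hf
  have hderiv : ∀ t ∈ Set.Ioo (0 : ℝ) (1 - s),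
      HasDerivAt f (Real.arctan (Real.sqrt (t / s)) / Real.sqrt (s * t)) t := by
    intro t ht
    have ht0 : 0 < t := ht.1
    have hts : 0 < t / s := div_pos ht0 hs0
    have hdiv : HasDerivAt (fun x : ℝ => x / s) (1 / s) t := by
      simpa using (hasDerivAt_id t).div_const s
    have hu : HasDerivAt (fun x : ℝ => Real.sqrt (x / s))
        (1 / (2 * Real.sqrt (t / s)) * (1 / s)) t :=
      (Real.hasDerivAt_sqrt hts.ne').comp t hdiv
    have harc : HasDerivAt (fun x : ℝ => Real.arctan (Real.sqrt (x / s)))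
        (1 / (1 + Real.sqrt (t / s) ^ 2) * (1 / (2 * Real.sqrt (t / s)) * (1 / s))) t :=
      (Real.hasDerivAt_arctan _).comp t hu
    have hpos : (0 : ℝ) < 1 + t / s := by positivity
    have hlogarg : HasDerivAt (fun x : ℝ => 1 + x / s) (1 / s) t := by
      simpa using (hdiv.const_add 1)
    have hlog : HasDerivAt (fun x : ℝ => Real.log (1 + x / s))
        ((1 + t / s)⁻¹ * (1 / s)) t :=
      by have := (Real.hasDerivAt_log hpos.ne').comp t hlogarg; exact this
    have hF := (((hu.mul harc).const_mul 2).sub hlog)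
    refine hF.congr_deriv ?_
    symm
    have ha : (0 : ℝ) < Real.sqrt s := Real.sqrt_pos.mpr hs0
    have hb : (0 : ℝ) < Real.sqrt t := Real.sqrt_pos.mpr ht0
    have e1 : Real.sqrt (t / s) = Real.sqrt t / Real.sqrt s := Real.sqrt_div ht0.le s
    have e2 : Real.sqrt (s * t) = Real.sqrt s * Real.sqrt t := Real.sqrt_mul hs0.le t
    have e3 : Real.sqrt s ^ 2 = s := Real.sq_sqrt hs0.le
    have e4 : Real.sqrt t ^ 2 = t := Real.sq_sqrt ht0.le
    set a := Real.sqrt s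
    set b := Real.sqrt t
    rw [e1, e2, ← e3, ← e4]
    have h1 : (0:ℝ) < 1 + (b/a)^2 := by positivity
    field_simp
    ring
  have hcont : ContinuousOn f (Set.Icc 0 (1 - s)) := by
    apply ContinuousOn.sub
    · exact (Continuous.continuousOn
        (continuous_const.mul ((Real.continuous_sqrt.comp (continuous_id.div_const s)).mul
          (Real.continuous_arctan.comp (Real.continuous_sqrt.comp (continuous_id.div_const s))))))
    · apply ContinuousOn.log
      · exact (Continuous.continuousOn (continuous_const.add (continuous_id.div_const s)))
      · intro t ht
        have : 0 ≤ t / s := div_nonneg ht.1 hs0.le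
        positivity
  have hint : IntervalIntegrable
      (fun t => Real.arctan (Real.sqrt (t / s)) / Real.sqrt (s * t)) volume 0 (1 - s) := by
    have hmaj : IntervalIntegrable
        (fun t : ℝ => (π / 2) * (Real.sqrt s)⁻¹ * t ^ (-(1/2) : ℝ)) volume 0 (1 - s) :=
      (intervalIntegral.intervalIntegrable_rpow' (by norm_num)).const_mul _
    apply hmaj.mono_fun'
    · apply Measurable.aestronglyMeasurable
      exact (Real.measurable_arctan.comp
        (Real.continuous_sqrt.measurable.comp (measurable_id.div_const s))).div
        (Real.continuous_sqrt.measurable.comp (measurable_const.mul measurable_id))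
    · rw [Filter.EventuallyLE, ae_restrict_iff' measurableSet_uIoc]
      refine Filter.Eventually.of_forall fun t ht => ?_
      rw [Set.uIoc_of_le h1s.le] at ht
      have ht0 : 0 < t := ht.1
      have ha : (0 : ℝ) < Real.sqrt s := Real.sqrt_pos.mpr hs0
      have hb : (0 : ℝ) < Real.sqrt t := Real.sqrt_pos.mpr ht0
      have e2 : Real.sqrt (s * t) = Real.sqrt s * Real.sqrt t := Real.sqrt_mul hs0.le t
      have erpow : t ^ (-(1/2) : ℝ) = (Real.sqrt t)⁻¹ := by
        rw [Real.rpow_neg ht0.le, Real.sqrt_eq_rpow]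
      have harc : |Real.arctan (Real.sqrt (t / s))| ≤ π / 2 := by
        rw [abs_le]
        exact ⟨(Real.neg_pi_div_two_lt_arctan _).le, (Real.arctan_lt_pi_div_two _).le⟩
      have : ‖Real.arctan (Real.sqrt (t / s)) / Real.sqrt (s * t)‖
          ≤ (π / 2) / (Real.sqrt s * Real.sqrt t) := by
        rw [norm_div, Real.norm_eq_abs, Real.norm_eq_abs, e2]
        rw [abs_of_pos (mul_pos ha hb)]
        exact (div_le_div_iff_of_pos_right (mul_pos ha hb)).mpr harc
      calc ‖Real.arctan (Real.sqrt (t / s)) / Real.sqrt (s * t)‖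
          ≤ (π / 2) / (Real.sqrt s * Real.sqrt t) := this
        _ = (π / 2) * (Real.sqrt s)⁻¹ * t ^ (-(1/2) : ℝ) := by
            rw [erpow, div_eq_mul_inv, mul_inv, ← mul_assoc]
  rw [← integral_Ioc_eq_integral_Ioo,
    ← intervalIntegral.integral_of_le h1s.le]
  rw [intervalIntegral.integral_eq_sub_of_hasDerivAt_of_le h1s.le hcont hderiv hint]
  have hval : (1 : ℝ) + (1 - s) / s = 1 / s := by field_simp; ring
  simp only [hf, hval]
  rw [Real.log_div one_ne_zero hs0.ne', Real.log_one]
  simp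

lemma stmt6_outer :
    (∫ s in (0:ℝ)..1,
        (2 * (Real.sqrt ((1 - s) / s) * Real.arctan (Real.sqrt ((1 - s) / s)))
          + Real.log s)) = π ^ 2 / 4 := by
  set F : ℝ → ℝ := fun s => -(Real.arccos (Real.sqrt s)) ^ 2
      + 2 * (Real.arccos (Real.sqrt s) * Real.sqrt (s - s ^ 2))
      + s * Real.log s - 1 / 2 with hF
  have harctan_eq : ∀ s ∈ Set.Ioo (0:ℝ) 1,
      Real.arccos (Real.sqrt s) = Real.arctan (Real.sqrt ((1 - s) / s)) := by
    intro s hs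
    rw [Real.arccos_eq_arctan (Real.sqrt_pos.mpr hs.1), Real.sq_sqrt hs.1.le,
      Real.sqrt_div (by linarith [hs.2] : (0:ℝ) ≤ 1 - s) s]
  have hderiv : ∀ s ∈ Set.Ioo (0:ℝ) 1, HasDerivAt F
      (2 * (Real.sqrt ((1 - s) / s) * Real.arctan (Real.sqrt ((1 - s) / s)))
        + Real.log s) s := by
    intro s hs
    obtain ⟨hs0, hs1⟩ := hs
    have hsne : Real.sqrt s ≠ 1 := by
      have : Real.sqrt s < 1 := by
        calc Real.sqrt s < Real.sqrt 1 := Real.sqrt_lt_sqrt hs0.le hs1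
          _ = 1 := Real.sqrt_one
      exact this.ne
    have hsnm : Real.sqrt s ≠ -1 := by
      have := Real.sqrt_nonneg s; intro h; rw [h] at this; linarith
    have hsq : HasDerivAt (fun x : ℝ => Real.sqrt x) (1 / (2 * Real.sqrt s)) s :=
      Real.hasDerivAt_sqrt hs0.ne'
    have hθ : HasDerivAt (fun x : ℝ => Real.arccos (Real.sqrt x))
        (-(1 / Real.sqrt (1 - Real.sqrt s ^ 2)) * (1 / (2 * Real.sqrt s))) s :=
      (Real.hasDerivAt_arccos hsnm hsne).comp s hsq
    have hpoly : HasDerivAt (fun x : ℝ => x - x ^ 2) (1 - 2 * s) s := by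
      exact ((hasDerivAt_id' s).sub (hasDerivAt_pow 2 s)).congr_deriv (by norm_num)
    have hss : (0:ℝ) < s - s ^ 2 := by nlinarith
    have hsqrt2 : HasDerivAt (fun x : ℝ => Real.sqrt (x - x ^ 2))
        (1 / (2 * Real.sqrt (s - s ^ 2)) * (1 - 2 * s)) s :=
      (Real.hasDerivAt_sqrt hss.ne').comp s hpoly
    have hml : HasDerivAt (fun x : ℝ => x * Real.log x) (Real.log s + 1) s :=
      Real.hasDerivAt_mul_log hs0.ne'
    have hcomb := ((((hθ.pow 2).neg.add ((hθ.mul hsqrt2).const_mul 2)).add hml).sub_const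
      (1 / 2))
    refine hcomb.congr_deriv ?_
    symm
    rw [← harctan_eq s ⟨hs0, hs1⟩]
    have ha : (0 : ℝ) < Real.sqrt s := Real.sqrt_pos.mpr hs0
    have hb : (0 : ℝ) < Real.sqrt (1 - s) := Real.sqrt_pos.mpr (by linarith)
    have e1 : Real.sqrt ((1 - s) / s) = Real.sqrt (1 - s) / Real.sqrt s :=
      Real.sqrt_div (by linarith) s
    have e2 : Real.sqrt (s - s ^ 2) = Real.sqrt s * Real.sqrt (1 - s) := by
      rw [show s - s ^ 2 = s * (1 - s) by ring, Real.sqrt_mul hs0.le]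
    have e3 : Real.sqrt (1 - Real.sqrt s ^ 2) = Real.sqrt (1 - s) := by
      rw [Real.sq_sqrt hs0.le]
    have e4 : Real.sqrt s ^ 2 = s := Real.sq_sqrt hs0.le
    have e5 : Real.sqrt (1 - s) ^ 2 = 1 - s := Real.sq_sqrt (by linarith)
    rw [e1, e2, e3]
    set a := Real.sqrt s
    set b := Real.sqrt (1 - s)
    set θ := Real.arccos a
    have hs' : s = a ^ 2 := e4.symm
    rw [hs']
    have hb2 : b ^ 2 = 1 - a ^ 2 := by rw [e5, hs']
    rw [show (1 : ℝ) - 2 * a ^ 2 = 2 * b ^ 2 - 1 by rw [hb2]; ring]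
    field_simp
    ring
  have hcont : ContinuousOn F (Set.Icc 0 1) := by
    apply Continuous.continuousOn
    have c1 : Continuous fun s : ℝ => Real.arccos (Real.sqrt s) :=
      Real.continuous_arccos.comp Real.continuous_sqrt
    have c2 : Continuous fun s : ℝ => Real.sqrt (s - s ^ 2) :=
      Real.continuous_sqrt.comp (by continuity)
    exact (((c1.pow 2).neg.add (continuous_const.mul (c1.mul c2))).add
      Real.continuous_mul_log).sub continuous_const
  have hint : IntervalIntegrable
      (fun s => 2 * (Real.sqrt ((1 - s) / s) * Real.arctan (Real.sqrt ((1 - s) / s)))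
        + Real.log s) volume 0 1 := by
    have hmaj : IntervalIntegrable
        (fun s : ℝ => (π + 2) * s ^ (-(1/2) : ℝ)) volume 0 1 :=
      (intervalIntegral.intervalIntegrable_rpow' (by norm_num)).const_mul _
    apply hmaj.mono_fun'
    · apply Measurable.aestronglyMeasurable
      apply Measurable.add
      · exact (measurable_const.mul ((Real.continuous_sqrt.measurable.comp
          ((measurable_const.sub measurable_id).div measurable_id)).mul
          (Real.measurable_arctan.comp (Real.continuous_sqrt.measurable.comp
          ((measurable_const.sub measurable_id).div measurable_id)))))
      · exact Real.measurable_log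
    · rw [Filter.EventuallyLE, ae_restrict_iff' measurableSet_uIoc]
      refine Filter.Eventually.of_forall fun s hsm => ?_
      rw [Set.uIoc_of_le zero_le_one] at hsm
      obtain ⟨hs0, hs1⟩ := hsm
      have ha : (0 : ℝ) < Real.sqrt s := Real.sqrt_pos.mpr hs0
      have erpow : s ^ (-(1/2) : ℝ) = (Real.sqrt s)⁻¹ := by
        rw [Real.rpow_neg hs0.le, Real.sqrt_eq_rpow]
      have e1 : Real.sqrt ((1 - s) / s) = Real.sqrt (1 - s) / Real.sqrt s :=
        Real.sqrt_div (by linarith) s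
      have hb1 : Real.sqrt (1 - s) ≤ 1 := by
        calc Real.sqrt (1 - s) ≤ Real.sqrt 1 := Real.sqrt_le_sqrt (by linarith)
          _ = 1 := Real.sqrt_one
      have harc : |Real.arctan (Real.sqrt ((1 - s) / s))| ≤ π / 2 := by
        rw [abs_le]
        exact ⟨(Real.neg_pi_div_two_lt_arctan _).le, (Real.arctan_lt_pi_div_two _).le⟩
      have hlog : |Real.log s| ≤ 2 * (Real.sqrt s)⁻¹ := by
        have h1 : Real.log s ≤ 0 := Real.log_nonpos hs0.le hs1
        rw [abs_of_nonpos h1]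
        have h2 : Real.log (Real.sqrt s)⁻¹ ≤ (Real.sqrt s)⁻¹ - 1 :=
          Real.log_le_sub_one_of_pos (by positivity)
        have h3 : Real.log (Real.sqrt s)⁻¹ = -(Real.log s) / 2 := by
          rw [Real.log_inv, Real.log_sqrt hs0.le]; ring
        rw [h3] at h2
        have h4 : (0:ℝ) < (Real.sqrt s)⁻¹ := by positivity
        linarith
      have hterm : |2 * (Real.sqrt ((1 - s) / s) * Real.arctan (Real.sqrt ((1 - s) / s)))|
          ≤ π * (Real.sqrt s)⁻¹ := by
        rw [abs_mul, abs_mul, abs_two]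
        have h5 : |Real.sqrt ((1 - s) / s)| ≤ (Real.sqrt s)⁻¹ := by
          rw [e1, abs_of_nonneg (by positivity), div_le_iff₀ ha, inv_mul_cancel₀ ha.ne']
          exact hb1
        calc 2 * (|Real.sqrt ((1 - s) / s)| * |Real.arctan (Real.sqrt ((1-s)/s))|)
            ≤ 2 * ((Real.sqrt s)⁻¹ * (π / 2)) := by
              apply mul_le_mul_of_nonneg_left _ (by norm_num)
              exact mul_le_mul h5 harc (abs_nonneg _) (by positivity)
          _ = π * (Real.sqrt s)⁻¹ := by ring
      calc ‖2 * (Real.sqrt ((1 - s) / s) * Real.arctan (Real.sqrt ((1 - s) / s)))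
            + Real.log s‖
          ≤ |2 * (Real.sqrt ((1 - s) / s) * Real.arctan (Real.sqrt ((1 - s) / s)))|
            + |Real.log s| := abs_add_le _ _
        _ ≤ π * (Real.sqrt s)⁻¹ + 2 * (Real.sqrt s)⁻¹ := add_le_add hterm hlog
        _ = (π + 2) * s ^ (-(1/2) : ℝ) := by rw [erpow]; ring
  rw [intervalIntegral.integral_eq_sub_of_hasDerivAt_of_le zero_le_one hcont hderiv hint]
  simp only [hF]
  rw [Real.sqrt_one, Real.sqrt_zero, Real.arccos_one, Real.arccos_zero]
  norm_num
  ring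

theorem stmt6 :
    (∫ s in Set.Ioo (0 : ℝ) 1, ∫ t in Set.Ioo (0 : ℝ) (1 - s),
        Real.arctan (Real.sqrt (t / s)) / Real.sqrt (s * t))
      = π ^ 2 / 4 := by
  rw [MeasureTheory.setIntegral_congr_fun measurableSet_Ioo
    (fun s hs => stmt6_inner hs)]
  rw [← integral_Ioc_eq_integral_Ioo, ← intervalIntegral.integral_of_le zero_le_one]
  exact stmt6_outer
end

section
/- For every integer k ≥ 3, ∫_0^∞ (w+1)^{2/k - 2} F(2/k, 1/k; 1 + 1/k; -w) dw = π cot(π/k) / (k-2). -/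
open MeasureTheory Real Set Filter Topology ENNReal


lemma beta_pt {a b t : ℝ} (h0 : 0 ≤ t) (h1 : t ≤ 1) :
    (t:ℂ) ^ ((a:ℂ) - 1) * (1 - (t:ℂ)) ^ ((b:ℂ) - 1)
      = ((t ^ (a - 1) * (1 - t) ^ (b - 1) : ℝ) : ℂ) := by
  have e1 : ((a - 1 : ℝ) : ℂ) = (a:ℂ) - 1 := by push_cast; ring
  have e2 : ((b - 1 : ℝ) : ℂ) = (b:ℂ) - 1 := by push_cast; ring
  have e3 : ((1 - t : ℝ) : ℂ) = 1 - (t:ℂ) := by push_cast; ring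
  rw [Complex.ofReal_mul, Complex.ofReal_cpow h0,
    Complex.ofReal_cpow (by linarith : (0:ℝ) ≤ 1 - t), e1, e2, e3]

lemma beta_complex_real_eq {a b : ℝ} :
    (∫ t in (0:ℝ)..1, (t:ℂ) ^ ((a:ℂ) - 1) * (1 - (t:ℂ)) ^ ((b:ℂ) - 1))
      = ((∫ t in Ioo (0:ℝ) 1, t ^ (a - 1) * (1 - t) ^ (b - 1) : ℝ) : ℂ) := by
  have : (∫ t in (0:ℝ)..1, (t:ℂ) ^ ((a:ℂ) - 1) * (1 - (t:ℂ)) ^ ((b:ℂ) - 1))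
      = ∫ t in (0:ℝ)..1, ((t ^ (a - 1) * (1 - t) ^ (b - 1) : ℝ) : ℂ) := by
    apply intervalIntegral.integral_congr
    intro t ht
    rw [uIcc_of_le zero_le_one] at ht
    exact beta_pt ht.1 ht.2
  rw [this, intervalIntegral.integral_ofReal, intervalIntegral.integral_of_le zero_le_one,
    integral_Ioc_eq_integral_Ioo]

lemma beta_integrable {a b : ℝ} (ha : 0 < a) (hb : 0 < b) :
    IntegrableOn (fun t : ℝ => t ^ (a - 1) * (1 - t) ^ (b - 1)) (Ioo 0 1) := by
  have h := Complex.betaIntegral_convergent (u := (a : ℂ)) (v := (b : ℂ)) (by simpa) (by simpa)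
  rw [intervalIntegrable_iff_integrableOn_Ioo_of_le zero_le_one] at h
  have h2 := h.re
  apply (integrable_congr ?_).mp h2
  filter_upwards [ae_restrict_mem measurableSet_Ioo] with t ht
  simp only [beta_pt ht.1.le ht.2.le, Complex.ofReal_re, RCLike.re_to_complex]

lemma beta_real {a b : ℝ} (ha : 0 < a) (hb : 0 < b) :
    ∫ t in Ioo (0:ℝ) 1, t ^ (a - 1) * (1 - t) ^ (b - 1)
      = Real.Gamma a * Real.Gamma b / Real.Gamma (a + b) := by
  have hab : Real.Gamma (a + b) ≠ 0 := (Real.Gamma_pos_of_pos (by linarith)).ne'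
  have h := Complex.Gamma_mul_Gamma_eq_betaIntegral (s := (a : ℂ)) (t := (b : ℂ))
    (by simpa) (by simpa)
  rw [Complex.betaIntegral, beta_complex_real_eq] at h
  rw [show ((a:ℂ) + (b:ℂ)) = ((a + b : ℝ) : ℂ) by push_cast; ring] at h
  rw [Complex.Gamma_ofReal, Complex.Gamma_ofReal, Complex.Gamma_ofReal,
    ← Complex.ofReal_mul, ← Complex.ofReal_mul] at h
  field_simp
  rw [mul_comm]
  exact_mod_cast h.symm


noncomputable def Gw (x t : ℝ) : ℝ → ℝ :=
  fun w => ((1 + w) ^ (2*x - 1) * (1 + t*w) ^ (1 - 2*x)) / ((2*x - 1) * (1 - t))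

section Wint
variable {x t : ℝ} (hx : 0 < x) (hx2 : x < 1/2) (ht0 : 0 < t) (ht1 : t < 1)
include hx hx2 ht0 ht1

lemma Gw_hasDeriv {w : ℝ} (hw : 0 ≤ w) :
    HasDerivAt (Gw x t) ((1 + w) ^ (2*x - 2) * (1 + t*w) ^ (-(2*x))) w := by
  have h1w : (0:ℝ) < 1 + w := by linarith
  have h1tw : (0:ℝ) < 1 + t*w := by nlinarith
  have hu : HasDerivAt (fun w : ℝ => (1 + w) ^ (2*x - 1))
      (1 * (2*x - 1) * (1 + w) ^ (2*x - 1 - 1)) w := by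
    have h : HasDerivAt (fun w : ℝ => 1 + w) 1 w := by
      simpa using (hasDerivAt_id w).const_add 1
    exact h.rpow_const (Or.inl h1w.ne')
  have hv : HasDerivAt (fun w : ℝ => (1 + t*w) ^ (1 - 2*x))
      (t * (1 - 2*x) * (1 + t*w) ^ (1 - 2*x - 1)) w := by
    have h : HasDerivAt (fun w : ℝ => 1 + t*w) t w := by
      simpa using ((hasDerivAt_id w).const_mul t).const_add 1
    exact h.rpow_const (Or.inl h1tw.ne')
  have hprod := (hu.mul hv).div_const ((2*x - 1) * (1 - t))
  convert hprod using 1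
  · rfl
  · rfl
  · rfl
  rw [show 2*x - 1 - 1 = 2*x - 2 by ring, show 1 - 2*x - 1 = -(2*x) by ring]
  rw [show (1 + w) ^ (2*x - 1) = (1 + w) * (1 + w) ^ (2*x - 2) by
      rw [show 2*x - 1 = 1 + (2*x - 2) by ring, Real.rpow_add h1w, Real.rpow_one],
    show (1 + t*w) ^ (1 - 2*x) = (1 + t*w) * (1 + t*w) ^ (-(2*x)) by
      rw [show 1 - 2*x = 1 + -(2*x) by ring, Real.rpow_add h1tw, Real.rpow_one]]
  have hne1 : 2*x - 1 ≠ 0 := by linarith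
  have hne2 : 1 - t ≠ 0 := by linarith
  field_simp
  ring

lemma Gw_tendsto : Tendsto (Gw x t) atTop (𝓝 (t ^ (1 - 2*x) / ((2*x - 1) * (1 - t)))) := by
  have h : Tendsto (fun w : ℝ => ((1 + t*w)/(1 + w)) ^ (1 - 2*x) / ((2*x - 1) * (1 - t)))
      atTop (𝓝 (t ^ (1 - 2*x) / ((2*x - 1) * (1 - t)))) := by
    apply Filter.Tendsto.div_const
    have hbase : Tendsto (fun w : ℝ => (1 + t*w)/(1 + w)) atTop (𝓝 t) := by
      have he : ∀ᶠ w : ℝ in atTop, t + (1 - t) * (1 + w)⁻¹ = (1 + t*w)/(1 + w) := by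
        filter_upwards [eventually_gt_atTop (0:ℝ)] with w hw
        have : (1:ℝ) + w ≠ 0 := by linarith
        field_simp
        ring
      have h2 : Tendsto (fun w : ℝ => t + (1 - t) * (1 + w)⁻¹) atTop (𝓝 t) := by
        have : Tendsto (fun w : ℝ => (1 + w)⁻¹) atTop (𝓝 0) :=
          (tendsto_inv_atTop_zero).comp (tendsto_atTop_add_const_left _ 1 tendsto_id)
        simpa using (this.const_mul (1 - t)).const_add t
      exact h2.congr' he
    exact ((Real.continuousAt_rpow_const t (1 - 2*x) (Or.inl ht0.ne')).tendsto.comp hbase)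
  apply h.congr'
  filter_upwards [eventually_gt_atTop (0:ℝ)] with w hw
  have h1w : (0:ℝ) < 1 + w := by linarith
  have h1tw : (0:ℝ) < 1 + t*w := by nlinarith
  rw [Real.div_rpow h1tw.le h1w.le]
  unfold Gw
  rw [show 2*x - 1 = -(1 - 2*x) by ring, Real.rpow_neg h1w.le]
  field_simp

lemma wint_value :
    ∫ w in Ioi (0:ℝ), (1 + w) ^ (2*x - 2) * (1 + t*w) ^ (-(2*x))
      = (1 - t ^ (1 - 2*x)) / ((1 - 2*x) * (1 - t)) := by
  have key := integral_Ioi_of_hasDerivAt_of_nonneg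
    (g := Gw x t) (g' := fun w => (1 + w) ^ (2*x - 2) * (1 + t*w) ^ (-(2*x))) (a := 0)
    ((Gw_hasDeriv hx hx2 ht0 ht1 le_rfl).continuousAt.continuousWithinAt)
    (fun w hw => Gw_hasDeriv hx hx2 ht0 ht1 (le_of_lt hw))
    (fun w hw => mul_nonneg (Real.rpow_nonneg (by linarith [mem_Ioi.mp hw]) _)
      (Real.rpow_nonneg (by nlinarith [mem_Ioi.mp hw]) _))
    (Gw_tendsto hx hx2 ht0 ht1)
  rw [key]
  unfold Gw
  have hne1 : 2*x - 1 ≠ 0 := by linarith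
  have hne2 : 1 - t ≠ 0 := by linarith
  simp only [mul_zero, add_zero, Real.one_rpow, one_mul]
  have h2 : (2*x-1)*(1-t) ≠ 0 := mul_ne_zero hne1 hne2
  have hD : (1-2*x)*(1-t) ≠ 0 := mul_ne_zero (by linarith) hne2
  rw [div_sub_div_same, div_eq_div_iff h2 hD]
  ring

lemma wint_integrable :
    IntegrableOn (fun w => (1 + w) ^ (2*x - 2) * (1 + t*w) ^ (-(2*x))) (Ioi (0:ℝ)) :=
  integrableOn_Ioi_deriv_of_nonneg
    ((Gw_hasDeriv hx hx2 ht0 ht1 le_rfl).continuousAt.continuousWithinAt)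
    (fun w hw => Gw_hasDeriv hx hx2 ht0 ht1 (le_of_lt hw))
    (fun w hw => mul_nonneg (Real.rpow_nonneg (by linarith [mem_Ioi.mp hw]) _)
      (Real.rpow_nonneg (by nlinarith [mem_Ioi.mp hw]) _))
    (Gw_tendsto hx hx2 ht0 ht1)

end Wint


lemma diffAt_Gamma_pos {y : ℝ} (hy : 0 < y) : DifferentiableAt ℝ Real.Gamma y :=
  Real.differentiableAt_Gamma (fun m => by
    have : (0:ℝ) ≤ m := Nat.cast_nonneg m
    intro h; rw [h] at hy; linarith)

lemma psi_reflection {x : ℝ} (hx : 0 < x) (hx1 : x < 1) :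
    deriv Real.Gamma (1-x) / Real.Gamma (1-x) - deriv Real.Gamma x / Real.Gamma x
      = π * Real.cot (π*x) := by
  have hA : 0 < Real.Gamma x := Real.Gamma_pos_of_pos hx
  have hB : 0 < Real.Gamma (1-x) := Real.Gamma_pos_of_pos (by linarith)
  have hs : 0 < Real.sin (π*x) := Real.sin_pos_of_pos_of_lt_pi (by positivity)
    (by nlinarith [Real.pi_pos])
  -- derivative of y ↦ Γ(y)Γ(1-y)
  have h1 : HasDerivAt (fun y : ℝ => Real.Gamma y * Real.Gamma (1-y))
      (deriv Real.Gamma x * Real.Gamma (1-x)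
        + Real.Gamma x * (deriv Real.Gamma (1-x) * (-1))) x := by
    have hg1 : HasDerivAt Real.Gamma (deriv Real.Gamma x) x := (diffAt_Gamma_pos hx).hasDerivAt
    have hinner : HasDerivAt (fun y : ℝ => 1 - y) (-1) x := by
      simpa using (hasDerivAt_id x).const_sub 1
    have hg2 : HasDerivAt (fun y : ℝ => Real.Gamma (1-y))
        (deriv Real.Gamma (1-x) * (-1)) x :=
      (diffAt_Gamma_pos (by linarith : (0:ℝ) < 1-x)).hasDerivAt.comp x hinner
    exact hg1.mul hg2
  -- derivative of y ↦ π / sin (π y)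
  have h2 : HasDerivAt (fun y : ℝ => π / Real.sin (π*y))
      ((0 * Real.sin (π*x) - π * (Real.cos (π*x) * π)) / (Real.sin (π*x))^2) x := by
    have hsin : HasDerivAt (fun y : ℝ => Real.sin (π*y)) (Real.cos (π*x) * π) x := by
      have hi : HasDerivAt (fun y : ℝ => π*y) π x := by simpa using (hasDerivAt_id x).const_mul π
      exact (Real.hasDerivAt_sin (π*x)).comp x hi
    exact (hasDerivAt_const x π).div hsin hs.ne'
  have hfun : (fun y : ℝ => Real.Gamma y * Real.Gamma (1-y))
      = fun y : ℝ => π / Real.sin (π*y) := funext Real.Gamma_mul_Gamma_one_sub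
  rw [hfun] at h1
  have hE := h1.unique h2
  have hAB := Real.Gamma_mul_Gamma_one_sub x
  rw [Real.cot_eq_cos_div_sin]
  set dA := deriv Real.Gamma x
  set dB := deriv Real.Gamma (1-x)
  set A := Real.Gamma x
  set B := Real.Gamma (1-x)
  set s := Real.sin (π*x)
  set c := Real.cos (π*x)
  rw [eq_div_iff hs.ne'] at hAB
  field_simp at hE ⊢
  apply mul_right_cancel₀ hs.ne'
  linear_combination (-1) * hE + (-(π*c)) * hAB


lemma diffAt_Gamma_pos' {y : ℝ} (hy : 0 < y) : DifferentiableAt ℝ Real.Gamma y :=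
  Real.differentiableAt_Gamma (fun m => by
    have : (0:ℝ) ≤ m := Nat.cast_nonneg m
    intro h; rw [h] at hy; linarith)

-- the function of ε appearing as the Beta difference value
noncomputable def betaDiff (x : ℝ) : ℝ → ℝ :=
  fun ε => Real.Gamma (1+ε) * ((Real.Gamma x / Real.Gamma (x+ε)
    - Real.Gamma (1-x) / Real.Gamma (1-x+ε)) / ε)

lemma betaDiff_tendsto {x : ℝ} (hx : 0 < x) (hx1 : x < 1) :
    Tendsto (betaDiff x) (𝓝[>] (0:ℝ)) (𝓝 (π * Real.cot (π*x))) := by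
  have hA : 0 < Real.Gamma x := Real.Gamma_pos_of_pos hx
  have hB : 0 < Real.Gamma (1-x) := Real.Gamma_pos_of_pos (by linarith)
  -- slope part
  have hq1 : HasDerivAt (fun ε : ℝ => Real.Gamma (x+ε)) (deriv Real.Gamma x) 0 :=
    HasDerivAt.comp_const_add x 0 (by simpa using (diffAt_Gamma_pos' hx).hasDerivAt)
  have hq2 : HasDerivAt (fun ε : ℝ => Real.Gamma (1-x+ε)) (deriv Real.Gamma (1-x)) 0 :=
    HasDerivAt.comp_const_add (1-x) 0
      (by simpa using (diffAt_Gamma_pos' (by linarith : (0:ℝ) < 1-x)).hasDerivAt)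
  have hd1 : HasDerivAt (fun ε : ℝ => Real.Gamma x / Real.Gamma (x+ε))
      ((0 * Real.Gamma (x+0) - Real.Gamma x * deriv Real.Gamma x) / (Real.Gamma (x+0))^2) 0 :=
    (hasDerivAt_const 0 (Real.Gamma x)).div hq1 (by rw [add_zero]; exact hA.ne')
  have hd2 : HasDerivAt (fun ε : ℝ => Real.Gamma (1-x) / Real.Gamma (1-x+ε))
      ((0 * Real.Gamma (1-x+0) - Real.Gamma (1-x) * deriv Real.Gamma (1-x))
        / (Real.Gamma (1-x+0))^2) 0 :=
    (hasDerivAt_const 0 (Real.Gamma (1-x))).div hq2 (by rw [add_zero]; exact hB.ne')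
  have hD : HasDerivAt (fun ε : ℝ => Real.Gamma x / Real.Gamma (x+ε)
      - Real.Gamma (1-x) / Real.Gamma (1-x+ε)) (π * Real.cot (π*x)) 0 := by
    have h := hd1.sub hd2
    convert h using 1
    · rfl
    · rfl
    · rfl
    rw [add_zero, add_zero]
    rw [← psi_reflection hx hx1]
    field_simp
    ring
  have hslope : Tendsto (fun ε : ℝ => (Real.Gamma x / Real.Gamma (x+ε)
      - Real.Gamma (1-x) / Real.Gamma (1-x+ε)) / ε) (𝓝[>] (0:ℝ)) (𝓝 (π * Real.cot (π*x))) := by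
    have h := hasDerivAt_iff_tendsto_slope.mp hD
    have h2 : Tendsto (slope (fun ε : ℝ => Real.Gamma x / Real.Gamma (x+ε)
        - Real.Gamma (1-x) / Real.Gamma (1-x+ε)) 0) (𝓝[>] (0:ℝ)) (𝓝 (π * Real.cot (π*x))) :=
      h.mono_left (nhdsWithin_mono 0 (fun y hy => by
        simp only [mem_compl_iff, mem_singleton_iff]; exact ne_of_gt hy))
    apply h2.congr
    intro ε
    rw [slope_def_field]
    rw [add_zero, add_zero, div_self hA.ne', div_self hB.ne']
    ring_nf
  have hgam : Tendsto (fun ε : ℝ => Real.Gamma (1+ε)) (𝓝[>] (0:ℝ)) (𝓝 1) := by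
    have hc : ContinuousAt (fun ε : ℝ => Real.Gamma (1+ε)) 0 := by
      apply ContinuousAt.comp (g := Real.Gamma)
      · rw [add_zero]; exact (diffAt_Gamma_pos' one_pos).continuousAt
      · exact (continuous_const.add continuous_id).continuousAt
    have := hc.tendsto
    rw [add_zero, Real.Gamma_one] at this
    exact this.mono_left nhdsWithin_le_nhds
  have := hgam.mul hslope
  rw [one_mul] at this
  exact this


section D
variable {x : ℝ} (hx : 0 < x) (hx2 : x < 1/2)
include hx hx2

lemma phi_integrable {ε : ℝ} (hε : 0 < ε) :
    IntegrableOn (fun t : ℝ => (t ^ (x-1) - t ^ (-x)) * (1-t) ^ (ε-1)) (Ioo 0 1) := by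
  have h1 := beta_integrable hx hε
  have h2 := beta_integrable (show (0:ℝ) < 1-x by linarith) hε
  rw [show (1:ℝ)-x-1 = -x by ring] at h2
  apply (h1.sub h2).congr
  filter_upwards with t
  simp only [Pi.sub_apply]
  ring

lemma phi_value {ε : ℝ} (hε : 0 < ε) :
    ∫ t in Ioo (0:ℝ) 1, (t ^ (x-1) - t ^ (-x)) * (1-t) ^ (ε-1) = betaDiff x ε := by
  have h1 := beta_integrable hx hε
  have h2 := beta_integrable (show (0:ℝ) < 1-x by linarith) hε
  rw [show (1:ℝ)-x-1 = -x by ring] at h2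
  have hsplit : ∫ t in Ioo (0:ℝ) 1, (t ^ (x-1) - t ^ (-x)) * (1-t) ^ (ε-1)
      = (∫ t in Ioo (0:ℝ) 1, t ^ (x-1) * (1-t) ^ (ε-1))
        - ∫ t in Ioo (0:ℝ) 1, t ^ (-x) * (1-t) ^ (ε-1) := by
    rw [← integral_sub h1 h2]
    exact setIntegral_congr_fun measurableSet_Ioo (fun t ht => by ring)
  rw [hsplit, beta_real hx hε]
  have hb2 := beta_real (show (0:ℝ) < 1-x by linarith) hε
  rw [show (1:ℝ)-x-1 = -x by ring] at hb2
  rw [hb2]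
  -- now express Gamma ε via Gamma (1+ε)
  have hgε : Real.Gamma ε = Real.Gamma (1+ε) / ε := by
    rw [add_comm, Real.Gamma_add_one hε.ne']
    field_simp
  unfold betaDiff
  rw [hgε]
  have hxε : Real.Gamma (x+ε) ≠ 0 := (Real.Gamma_pos_of_pos (by linarith)).ne'
  have h1xε : Real.Gamma (1-x+ε) ≠ 0 := (Real.Gamma_pos_of_pos (by linarith)).ne'
  field_simp

lemma D_lintegral :
    ∫⁻ t in Ioo (0:ℝ) 1, ENNReal.ofReal ((t ^ (x-1) - t ^ (-x)) * (1-t)⁻¹)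
      = ENNReal.ofReal (π * Real.cot (π*x)) := by
  set f : ℕ → ℝ → ℝ≥0∞ := fun n t =>
    ENNReal.ofReal ((t ^ (x-1) - t ^ (-x)) * (1-t) ^ ((1:ℝ)/(n+1) - 1)) with hf
  have hmeas : ∀ n, AEMeasurable (f n) (volume.restrict (Ioo (0:ℝ) 1)) := by
    intro n
    apply Measurable.aemeasurable
    apply Measurable.ennreal_ofReal
    fun_prop
  have hphi_nonneg : ∀ t : ℝ, t ∈ Ioo (0:ℝ) 1 → 0 ≤ t ^ (x-1) - t ^ (-x) := by
    intro t ht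
    have := Real.rpow_le_rpow_of_exponent_ge ht.1 ht.2.le (show x - 1 ≤ -x by linarith)
    linarith
  have hmono : ∀ᵐ t ∂(volume.restrict (Ioo (0:ℝ) 1)), Monotone fun n => f n t := by
    filter_upwards [ae_restrict_mem measurableSet_Ioo] with t ht
    intro n m hnm
    apply ENNReal.ofReal_le_ofReal
    apply mul_le_mul_of_nonneg_left _ (hphi_nonneg t ht)
    apply Real.rpow_le_rpow_of_exponent_ge (by linarith [ht.2]) (by linarith [ht.1])
    have hc : (n:ℝ) ≤ m := Nat.cast_le.mpr hnm
    have h1 : (1:ℝ)/(m+1) ≤ 1/(n+1) := by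
      apply one_div_le_one_div_of_le (by positivity)
      linarith
    linarith
  have htend : ∀ᵐ t ∂(volume.restrict (Ioo (0:ℝ) 1)),
      Tendsto (fun n => f n t) atTop (𝓝 (ENNReal.ofReal ((t ^ (x-1) - t ^ (-x)) * (1-t)⁻¹))) := by
    filter_upwards [ae_restrict_mem measurableSet_Ioo] with t ht
    have h1t : (0:ℝ) < 1 - t := by linarith [ht.2]
    apply (ENNReal.continuous_ofReal.tendsto _).comp
    rw [← Real.rpow_neg_one (1-t)]
    apply Filter.Tendsto.const_mul
    have hexp : Tendsto (fun n : ℕ => (1:ℝ)/(n+1) - 1) atTop (𝓝 (-1)) := by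
      have := tendsto_one_div_add_atTop_nhds_zero_nat (𝕜 := ℝ)
      simpa using this.sub_const 1
    have hcont : Continuous (fun y : ℝ => (1-t) ^ y) := by
      simp only [Real.rpow_def_of_pos h1t]
      exact Real.continuous_exp.comp (continuous_const.mul continuous_id)
    exact (hcont.tendsto _).comp hexp
  have hkey := lintegral_tendsto_of_tendsto_of_monotone hmeas hmono htend
  have hvals : ∀ n : ℕ, ∫⁻ t in Ioo (0:ℝ) 1, f n t ∂volume
      = ENNReal.ofReal (betaDiff x ((1:ℝ)/(n+1))) := by
    intro n
    have hε : (0:ℝ) < 1/(n+1) := by positivity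
    rw [← phi_value hx hx2 hε, ofReal_integral_eq_lintegral_ofReal (phi_integrable hx hx2 hε)]
    filter_upwards [ae_restrict_mem measurableSet_Ioo] with t ht
    exact mul_nonneg (hphi_nonneg t ht) (Real.rpow_nonneg (by linarith [ht.2]) _)
  have hlim2 : Tendsto (fun n : ℕ => ENNReal.ofReal (betaDiff x ((1:ℝ)/(n+1)))) atTop
      (𝓝 (ENNReal.ofReal (π * Real.cot (π*x)))) := by
    apply (ENNReal.continuous_ofReal.tendsto _).comp
    apply (betaDiff_tendsto hx (by linarith)).comp
    apply tendsto_nhdsWithin_of_tendsto_nhds_of_eventually_within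
    · exact tendsto_one_div_add_atTop_nhds_zero_nat
    · filter_upwards with n
      exact mem_Ioi.mpr (by positivity)
  simp_rw [hvals] at hkey
  exact tendsto_nhds_unique hkey hlim2

end D


section Master
variable {x : ℝ} (hx : 0 < x) (hx2 : x < 1/2)
include hx hx2

lemma cot_pos : 0 < π * Real.cot (π*x) := by
  have h1 : 0 < π*x := by positivity
  have h2 : π*x < π/2 := by nlinarith [Real.pi_pos]
  rw [Real.cot_eq_cos_div_sin]
  have hc : 0 < Real.cos (π*x) := Real.cos_pos_of_mem_Ioo
    ⟨by linarith [Real.pi_pos], h2⟩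
  have hs : 0 < Real.sin (π*x) := Real.sin_pos_of_pos_of_lt_pi h1
    (by nlinarith [Real.pi_pos])
  positivity

lemma inner_integrable {w : ℝ} (hw : 0 < w) :
    IntegrableOn (fun t : ℝ => t ^ (x-1) * (1 + t*w) ^ (-(2*x))) (Ioo 0 1) := by
  have hbase : IntegrableOn (fun t : ℝ => t ^ (x-1)) (Ioo 0 1) := by
    have h := beta_integrable hx one_pos
    apply h.congr
    filter_upwards [ae_restrict_mem measurableSet_Ioo] with t ht
    rw [show (1:ℝ)-1 = 0 by ring, Real.rpow_zero, mul_one]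
  apply hbase.mono' ?_ ?_
  · apply Measurable.aestronglyMeasurable; fun_prop
  · filter_upwards [ae_restrict_mem measurableSet_Ioo] with t ht
    have h1 : (0:ℝ) ≤ t ^ (x-1) := Real.rpow_nonneg ht.1.le _
    have h2 : (1 + t*w) ^ (-(2*x)) ≤ 1 :=
      Real.rpow_le_one_of_one_le_of_nonpos (by nlinarith [ht.1]) (by linarith)
    have h3 : (0:ℝ) ≤ (1 + t*w) ^ (-(2*x)) := Real.rpow_nonneg (by nlinarith [ht.1]) _
    rw [norm_mul, norm_of_nonneg h1, norm_of_nonneg h3]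
    nlinarith

lemma master :
    ∫ w in Ioi (0:ℝ), (1+w) ^ (2*x-2) * (x * ∫ t in Ioo (0:ℝ) 1, t ^ (x-1) * (1 + t*w) ^ (-(2*x)))
      = x / (1-2*x) * (π * Real.cot (π*x)) := by
  have h12x : (0:ℝ) < 1 - 2*x := by linarith
  set I : ℝ → ℝ := fun w => ∫ t in Ioo (0:ℝ) 1, t ^ (x-1) * (1 + t*w) ^ (-(2*x)) with hI
  -- measurability of I
  have hImeas : StronglyMeasurable I := by
    apply MeasureTheory.StronglyMeasurable.integral_prod_right
      (f := fun w t => t ^ (x-1) * (1 + t*w) ^ (-(2*x)))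
    apply Measurable.stronglyMeasurable
    fun_prop
  -- Step 2 : to lintegral
  have step2 : ∫ w in Ioi (0:ℝ), (1+w) ^ (2*x-2) * (x * I w)
      = (∫⁻ w in Ioi (0:ℝ), ENNReal.ofReal ((1+w) ^ (2*x-2) * (x * I w))).toReal := by
    apply integral_eq_lintegral_of_nonneg_ae
    · filter_upwards [ae_restrict_mem measurableSet_Ioi] with w hw
      have hIw : 0 ≤ I w := by
        apply setIntegral_nonneg measurableSet_Ioo
        intro t ht
        exact mul_nonneg (Real.rpow_nonneg ht.1.le _)
          (Real.rpow_nonneg (by nlinarith [ht.1, mem_Ioi.mp hw]) _)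
      have : (0:ℝ) ≤ (1+w) ^ (2*x-2) := Real.rpow_nonneg (by linarith [mem_Ioi.mp hw]) _
      positivity
    · apply Measurable.aestronglyMeasurable
      apply Measurable.mul ?_ (hImeas.measurable.const_mul x)
      fun_prop
  -- Step 3 : inner as lintegral
  have step3 : ∀ w ∈ Ioi (0:ℝ), ENNReal.ofReal ((1+w) ^ (2*x-2) * (x * I w))
      = ∫⁻ t in Ioo (0:ℝ) 1,
          ENNReal.ofReal ((x * (1+w) ^ (2*x-2)) * (t ^ (x-1) * (1 + t*w) ^ (-(2*x)))) := by
    intro w hw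
    rw [mem_Ioi] at hw
    have hint := (inner_integrable hx hx2 hw).const_mul (x * (1+w) ^ (2*x-2))
    rw [← ofReal_integral_eq_lintegral_ofReal hint ?_]
    · rw [integral_const_mul]
      congr 1
      rw [hI]
      ring
    · filter_upwards [ae_restrict_mem measurableSet_Ioo] with t ht
      have := Real.rpow_nonneg (show (0:ℝ) ≤ 1+w by linarith) (2*x-2)
      have := Real.rpow_nonneg ht.1.le (x-1)
      have := Real.rpow_nonneg (show (0:ℝ) ≤ 1+t*w by nlinarith [ht.1]) (-(2*x))
      positivity
  -- Step 4 : swap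
  have step4 : ∫⁻ w in Ioi (0:ℝ), ∫⁻ t in Ioo (0:ℝ) 1,
        ENNReal.ofReal ((x * (1+w) ^ (2*x-2)) * (t ^ (x-1) * (1 + t*w) ^ (-(2*x))))
      = ∫⁻ t in Ioo (0:ℝ) 1, ∫⁻ w in Ioi (0:ℝ),
        ENNReal.ofReal ((x * (1+w) ^ (2*x-2)) * (t ^ (x-1) * (1 + t*w) ^ (-(2*x)))) := by
    apply lintegral_lintegral_swap
    apply Measurable.aemeasurable
    apply Measurable.ennreal_ofReal
    fun_prop
  -- Step 5 : inner w-lintegral value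
  have step5 : ∀ t ∈ Ioo (0:ℝ) 1, (∫⁻ w in Ioi (0:ℝ),
        ENNReal.ofReal ((x * (1+w) ^ (2*x-2)) * (t ^ (x-1) * (1 + t*w) ^ (-(2*x)))))
      = ENNReal.ofReal ((x / (1-2*x)) * ((t ^ (x-1) - t ^ (-x)) * (1-t)⁻¹)) := by
    intro t ht
    have hval := wint_value hx hx2 ht.1 ht.2
    have hint := (wint_integrable hx hx2 ht.1 ht.2).const_mul (x * t ^ (x-1))
    have heq : ∀ w : ℝ, (x * (1+w) ^ (2*x-2)) * (t ^ (x-1) * (1 + t*w) ^ (-(2*x)))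
        = (x * t ^ (x-1)) * ((1+w) ^ (2*x-2) * (1 + t*w) ^ (-(2*x))) := fun w => by ring
    simp_rw [heq]
    rw [← ofReal_integral_eq_lintegral_ofReal hint ?_]
    · rw [integral_const_mul, hval]
      congr 1
      have ht1 : (0:ℝ) < 1 - t := by linarith [ht.2]
      have hsplit : t ^ (x-1) * (1 - t ^ (1-2*x)) = t ^ (x-1) - t ^ (-x) := by
        rw [mul_sub, mul_one, ← Real.rpow_add ht.1, show x-1+(1-2*x) = -x by ring]
      have h2 : (1-2*x) ≠ 0 := by linarith
      field_simp
      rw [show x*2 = 2*x by ring, hsplit]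
    · filter_upwards [ae_restrict_mem measurableSet_Ioi] with w hw
      rw [mem_Ioi] at hw
      have := Real.rpow_nonneg (show (0:ℝ) ≤ 1+w by linarith) (2*x-2)
      have := Real.rpow_nonneg ht.1.le (x-1)
      have := Real.rpow_nonneg (show (0:ℝ) ≤ 1+t*w by nlinarith [ht.1]) (-(2*x))
      positivity
  -- Step 7 : outer t-lintegral
  have step7 : ∫⁻ t in Ioo (0:ℝ) 1,
        ENNReal.ofReal ((x / (1-2*x)) * ((t ^ (x-1) - t ^ (-x)) * (1-t)⁻¹))
      = ENNReal.ofReal (x / (1-2*x) * (π * Real.cot (π*x))) := by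
    have hc : (0:ℝ) ≤ x / (1-2*x) := by positivity
    simp_rw [ENNReal.ofReal_mul hc]
    rw [lintegral_const_mul' _ _ ENNReal.ofReal_ne_top, D_lintegral hx hx2,
      ← ENNReal.ofReal_mul hc]
  -- assemble
  rw [step2]
  rw [setLIntegral_congr_fun measurableSet_Ioi
    (fun w hw => step3 w hw)]
  rw [step4]
  rw [setLIntegral_congr_fun measurableSet_Ioo
    (fun t ht => step5 t ht)]
  rw [step7, ENNReal.toReal_ofReal]
  have := cot_pos hx hx2
  positivity

end Master

/-- The Gauss hypergeometric function `₂F₁(a, b; c; z)`, given (for `c > b > 0` and `z < 1`)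
by Euler's integral representation. -/
noncomputable def hypF (a b c z : ℝ) : ℝ :=
  (Real.Gamma c / (Real.Gamma b * Real.Gamma (c - b))) *
    ∫ t in Set.Ioo (0 : ℝ) 1, t ^ (b - 1) * (1 - t) ^ (c - b - 1) * (1 - z * t) ^ (-a)



theorem stmt8 (k : ℕ) (hk : 3 ≤ k) :
    (∫ w in Set.Ioi (0 : ℝ),
        (w + 1) ^ ((2 : ℝ) / k - 2) * hypF (2 / k) (1 / k) (1 + 1 / k) (-w))
      = π * Real.cot (π / k) / ((k : ℝ) - 2) := by
  have hk0 : (0:ℝ) < k := by exact_mod_cast (by omega : 0 < k)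
  have hk2 : (2:ℝ) < k := by exact_mod_cast (by omega : 2 < k)
  have hx : (0:ℝ) < 1/(k:ℝ) := by positivity
  have hx2 : 1/(k:ℝ) < 1/2 := by rw [div_lt_div_iff₀ hk0 two_pos]; linarith
  have hΓ : Real.Gamma (1/(k:ℝ)) ≠ 0 := (Real.Gamma_pos_of_pos hx).ne'
  have hcongr : (∫ w in Set.Ioi (0 : ℝ),
        (w + 1) ^ ((2 : ℝ) / k - 2) * hypF (2 / k) (1 / k) (1 + 1 / k) (-w))
      = ∫ w in Ioi (0:ℝ), (1+w) ^ (2*(1/(k:ℝ))-2)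
          * ((1/(k:ℝ)) * ∫ t in Ioo (0:ℝ) 1,
              t ^ (1/(k:ℝ)-1) * (1 + t*w) ^ (-(2*(1/(k:ℝ))))) := by
    apply setIntegral_congr_fun measurableSet_Ioi
    intro w hw
    simp only
    rw [show (2:ℝ)/↑k - 2 = 2*(1/↑k)-2 by ring, add_comm w 1]
    congr 1
    unfold hypF
    rw [show (1:ℝ) + 1/↑k - 1/↑k = 1 by ring, Real.Gamma_one,
      show (1:ℝ) + 1/↑k = 1/↑k + 1 by ring,
      Real.Gamma_add_one (by positivity : (1:ℝ)/↑k ≠ 0)]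
    have hpre : 1/(k:ℝ) * Real.Gamma (1/↑k) / (Real.Gamma (1/↑k) * 1) = 1/(k:ℝ) := by
      field_simp
    rw [hpre]
    congr 1
    apply setIntegral_congr_fun measurableSet_Ioo
    intro t ht
    simp only
    rw [show (1:ℝ) - 1 = 0 by ring, Real.rpow_zero, mul_one,
      show (1:ℝ) - -w*t = 1 + t*w by ring, show -((2:ℝ)/↑k) = -(2*(1/↑k)) by ring]
  rw [hcongr, master hx hx2, mul_one_div π (k:ℝ)]
  have h2k : 1 - 2*(1/(k:ℝ)) ≠ 0 := by
    rw [sub_ne_zero]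
    intro h
    rw [mul_one_div] at h
    have : (k:ℝ) = 2 := by field_simp at h; linarith
    linarith
  field_simp
end

section
/- Let k ≥ 1 be an integer, let (r_m) be a sequence of positive reals with r_m/m → 1, and let t ≥ 0. Let R_{m} be the minimum of m i.i.d. Gamma(k,1) random variables, and let M(m, u) be distributed as R_m conditioned on R_m > u. Then r_m^{1/k} · M(m, t·r_m^{-1/k}) converges in distribution as m → ∞ to (t^k + k!·E)^{1/k}, where E ~ Exp(1). Equivalently, for every fixed x ≥ t, P(r_m^{1/k} M(m, t r_m^{-1/k}) > x) → exp(-(x^k - t^k)/k!). -/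
open MeasureTheory Real Set Filter

/-- The survival function of Gamma(k,1): `e^{-u} ∑_{j<k} u^j/j!`. -/
noncomputable def Sfun (k : ℕ) (u : ℝ) : ℝ :=
  Real.exp (-u) * ∑ j ∈ Finset.range k, u ^ j / (Nat.factorial j : ℝ)

lemma hasDerivAt_sum_pow (n : ℕ) (u : ℝ) :
    HasDerivAt (fun v : ℝ => ∑ j ∈ Finset.range (n+1), v ^ j / (Nat.factorial j : ℝ))
      (∑ j ∈ Finset.range n, u ^ j / (Nat.factorial j : ℝ)) u := by
  have h : HasDerivAt (fun v : ℝ => ∑ j ∈ Finset.range (n+1), v ^ j / (Nat.factorial j : ℝ))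
      (∑ j ∈ Finset.range (n+1), ((j : ℝ) * u ^ (j-1)) / (Nat.factorial j : ℝ)) u :=
    HasDerivAt.fun_sum fun j _ => (hasDerivAt_pow j u).div_const _
  convert h using 1
  rw [Finset.sum_range_succ']
  simp only [Nat.cast_zero, zero_mul, Nat.factorial_zero, Nat.cast_one, zero_div, add_zero]
  apply Finset.sum_congr rfl
  intro j _
  rw [Nat.add_sub_cancel, Nat.factorial_succ]
  have hj : ((j:ℝ) + 1) ≠ 0 := by positivity
  have hf : ((Nat.factorial j : ℝ)) ≠ 0 := by positivity
  push_cast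
  field_simp

lemma sfun_hasDerivAt (n : ℕ) (u : ℝ) :
    HasDerivAt (Sfun (n+1)) (-(u ^ n * Real.exp (-u) / (Nat.factorial n : ℝ))) u := by
  have hexp : HasDerivAt (fun v : ℝ => Real.exp (-v)) (Real.exp (-u) * (-1)) u :=
    (hasDerivAt_neg u).exp
  have h := hexp.fun_mul (hasDerivAt_sum_pow n u)
  have heq : Sfun (n+1) = fun v : ℝ =>
      Real.exp (-v) * ∑ j ∈ Finset.range (n+1), v ^ j / (Nat.factorial j : ℝ) := rfl
  rw [heq]
  refine h.congr_deriv ?_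
  rw [Finset.sum_range_succ]
  ring

lemma sfun_hasDerivAt' (n : ℕ) (v : ℝ) :
    HasDerivAt (fun w => -((Nat.factorial n : ℝ) * Sfun (n+1) w)) (v ^ n * Real.exp (-v)) v := by
  have h := (HasDerivAt.const_mul ((Nat.factorial n : ℝ)) (sfun_hasDerivAt n v)).neg
  refine h.congr_deriv ?_
  have hf : ((Nat.factorial n : ℝ)) ≠ 0 := by positivity
  rw [mul_neg, neg_neg]
  field_simp

lemma sfun_continuous (k : ℕ) : Continuous (Sfun k) := by
  unfold Sfun
  exact (Real.continuous_exp.comp continuous_neg).mul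
    (continuous_finset_sum _ fun j _ => (continuous_pow j).div_const _)

lemma sfun_tendsto_atTop (k : ℕ) : Tendsto (Sfun k) atTop (nhds 0) := by
  have h := tendsto_finset_sum (Finset.range k)
    (fun j (_ : j ∈ Finset.range k) =>
      (tendsto_pow_mul_exp_neg_atTop_nhds_zero j).div_const ((Nat.factorial j : ℝ)))
  simp only [zero_div, Finset.sum_const_zero] at h
  refine h.congr fun u => ?_
  rw [Sfun, Finset.mul_sum]
  exact Finset.sum_congr rfl fun j _ => by ring

lemma integrable_pow_exp (n : ℕ) (u : ℝ) (hu : 0 ≤ u) :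
    IntegrableOn (fun s : ℝ => s ^ n * Real.exp (-s)) (Set.Ioi u) := by
  have h := Real.GammaIntegral_convergent (s := (n : ℝ) + 1) (by positivity)
  have h2 : IntegrableOn (fun s : ℝ => s ^ n * Real.exp (-s)) (Set.Ioi 0) := by
    apply h.congr_fun ?_ measurableSet_Ioi
    intro s hs
    show Real.exp (-s) * s ^ ((n:ℝ) + 1 - 1) = s ^ n * Real.exp (-s)
    rw [add_sub_cancel_right, Real.rpow_natCast]
    ring
  exact h2.mono_set (Set.Ioi_subset_Ioi hu)

lemma upperGamma_eq (n : ℕ) (u : ℝ) (hu : 0 ≤ u) :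
    upperGamma (n+1) u = (Nat.factorial n : ℝ) * Sfun (n+1) u := by
  have hcont : ContinuousWithinAt (fun v => -((Nat.factorial n : ℝ) * Sfun (n+1) v)) (Set.Ici u) u :=
    ((continuous_const.mul (sfun_continuous (n+1))).neg).continuousWithinAt
  have htend : Tendsto (fun v => -((Nat.factorial n : ℝ) * Sfun (n+1) v)) atTop (nhds 0) := by
    have := ((sfun_tendsto_atTop (n+1)).const_mul ((Nat.factorial n : ℝ))).neg
    simpa using this
  have h := integral_Ioi_of_hasDerivAt_of_tendsto hcont
    (fun v _ => sfun_hasDerivAt' n v) (integrable_pow_exp n u hu) htend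
  rw [upperGamma]
  simpa using h

lemma sfun_pos (n : ℕ) (u : ℝ) (hu : 0 ≤ u) : 0 < Sfun (n+1) u := by
  apply mul_pos (Real.exp_pos _)
  apply Finset.sum_pos' (fun j _ => by positivity)
  exact ⟨0, Finset.mem_range.2 (Nat.succ_pos n), by norm_num⟩

lemma sfun_zero (n : ℕ) : Sfun (n+1) 0 = 1 := by
  rw [Sfun, Finset.sum_range_succ']
  simp

lemma one_sub_sfun (n : ℕ) (u : ℝ) :
    (Nat.factorial n : ℝ) * (1 - Sfun (n+1) u) = ∫ s in (0:ℝ)..u, s ^ n * Real.exp (-s) := by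
  have hC : Continuous fun s : ℝ => s ^ n * Real.exp (-s) :=
    (continuous_pow n).mul (Real.continuous_exp.comp continuous_neg)
  have h := intervalIntegral.integral_eq_sub_of_hasDerivAt
    (f := fun w => -((Nat.factorial n : ℝ) * Sfun (n+1) w))
    (fun v _ => sfun_hasDerivAt' n v) (hC.intervalIntegrable 0 u)
  rw [h]
  simp only [sfun_zero]
  ring

lemma sfun_lt_one (n : ℕ) (u : ℝ) (hu : 0 < u) : Sfun (n+1) u < 1 := by
  have h := one_sub_sfun n u
  have hC : Continuous fun s : ℝ => s ^ n * Real.exp (-s) :=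
    (continuous_pow n).mul (Real.continuous_exp.comp continuous_neg)
  have hpos : 0 < ∫ s in (0:ℝ)..u, s ^ n * Real.exp (-s) := by
    apply intervalIntegral.intervalIntegral_pos_of_pos_on (hC.intervalIntegrable 0 u) ?_ hu
    intro s hs
    exact mul_pos (pow_pos hs.1 n) (Real.exp_pos _)
  have hfac : (0:ℝ) < (Nat.factorial n : ℝ) := by positivity
  nlinarith

lemma integral_bounds (n : ℕ) (u : ℝ) (hu : 0 < u) :
    Real.exp (-u) * (u ^ (n+1) / ((n:ℝ)+1)) ≤ (∫ s in (0:ℝ)..u, s ^ n * Real.exp (-s)) ∧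
    (∫ s in (0:ℝ)..u, s ^ n * Real.exp (-s)) ≤ u ^ (n+1) / ((n:ℝ)+1) := by
  have hC : Continuous fun s : ℝ => s ^ n * Real.exp (-s) :=
    (continuous_pow n).mul (Real.continuous_exp.comp continuous_neg)
  have hCl : Continuous fun s : ℝ => Real.exp (-u) * s ^ n :=
    continuous_const.mul (continuous_pow n)
  constructor
  · have h1 : (∫ s in (0:ℝ)..u, Real.exp (-u) * s ^ n) ≤ ∫ s in (0:ℝ)..u, s ^ n * Real.exp (-s) := by
      apply intervalIntegral.integral_mono_on hu.le (hCl.intervalIntegrable 0 u)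
        (hC.intervalIntegrable 0 u)
      intro s hs
      have h0 : (0:ℝ) ≤ s := hs.1
      have he : Real.exp (-u) ≤ Real.exp (-s) := Real.exp_le_exp.2 (by linarith [hs.2])
      nlinarith [pow_nonneg h0 n, Real.exp_pos (-u)]
    calc Real.exp (-u) * (u ^ (n+1) / ((n:ℝ)+1))
        = ∫ s in (0:ℝ)..u, Real.exp (-u) * s ^ n := by
          rw [intervalIntegral.integral_const_mul, integral_pow]
          norm_num
      _ ≤ _ := h1
  · have h1 : (∫ s in (0:ℝ)..u, s ^ n * Real.exp (-s)) ≤ ∫ s in (0:ℝ)..u, s ^ n := by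
      apply intervalIntegral.integral_mono_on hu.le (hC.intervalIntegrable 0 u)
        ((continuous_pow n).intervalIntegrable 0 u)
      intro s hs
      have h0 : (0:ℝ) ≤ s := hs.1
      have he : Real.exp (-s) ≤ 1 := Real.exp_le_one_iff.2 (by linarith)
      nlinarith [pow_nonneg h0 n]
    calc (∫ s in (0:ℝ)..u, s ^ n * Real.exp (-s)) ≤ ∫ s in (0:ℝ)..u, s ^ n := h1
      _ = u ^ (n+1) / ((n:ℝ)+1) := by rw [integral_pow]; norm_num

lemma ratio_tendsto (n : ℕ) :
    Tendsto (fun u => (1 - Sfun (n+1) u) / u ^ (n+1)) (nhdsWithin (0:ℝ) (Set.Ioi 0))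
      (nhds (1 / (Nat.factorial (n+1) : ℝ))) := by
  have hlow : Tendsto (fun u : ℝ => Real.exp (-u) / (Nat.factorial (n+1) : ℝ))
      (nhdsWithin (0:ℝ) (Set.Ioi 0)) (nhds (1 / (Nat.factorial (n+1) : ℝ))) := by
    have h1 : Tendsto (fun u : ℝ => Real.exp (-u)) (nhdsWithin (0:ℝ) (Set.Ioi 0)) (nhds 1) := by
      have := (Real.continuous_exp.comp continuous_neg).tendsto 0
      simp only [Function.comp, neg_zero, Real.exp_zero] at this
      exact this.mono_left nhdsWithin_le_nhds
    exact h1.div_const _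
  apply tendsto_of_tendsto_of_tendsto_of_le_of_le' hlow tendsto_const_nhds
  · filter_upwards [self_mem_nhdsWithin] with u hu
    have hu : (0:ℝ) < u := hu
    obtain ⟨h1, _⟩ := integral_bounds n u hu
    rw [← one_sub_sfun] at h1
    rw [div_le_div_iff₀ (by positivity) (by positivity), Nat.factorial_succ]
    push_cast
    have hd : (0:ℝ) < (n:ℝ)+1 := by positivity
    have hle := mul_le_mul_of_nonneg_left h1 hd.le
    have hmul : ((n:ℝ)+1) * (Real.exp (-u) * (u^(n+1)/((n:ℝ)+1))) = Real.exp (-u) * u^(n+1) := by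
      field_simp
    rw [hmul] at hle
    linarith
  · filter_upwards [self_mem_nhdsWithin] with u hu
    have hu : (0:ℝ) < u := hu
    obtain ⟨_, h2⟩ := integral_bounds n u hu
    rw [← one_sub_sfun] at h2
    rw [div_le_div_iff₀ (by positivity) (by positivity), Nat.factorial_succ]
    push_cast
    have hd : (0:ℝ) < (n:ℝ)+1 := by positivity
    have hle := mul_le_mul_of_nonneg_left h2 hd.le
    have hmul : ((n:ℝ)+1) * (u^(n+1)/((n:ℝ)+1)) = u^(n+1) := by field_simp
    rw [hmul] at hle
    linarith

lemma logS_tendsto (n : ℕ) :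
    Tendsto (fun u => Real.log (Sfun (n+1) u) / u ^ (n+1)) (nhdsWithin (0:ℝ) (Set.Ioi 0))
      (nhds (-(1 / (Nat.factorial (n+1) : ℝ)))) := by
  have h1 : Tendsto (fun u => (Sfun (n+1) u - 1) / u ^ (n+1)) (nhdsWithin (0:ℝ) (Set.Ioi 0))
      (nhds (-(1 / (Nat.factorial (n+1) : ℝ)))) := by
    refine (ratio_tendsto n).neg.congr fun u => ?_
    rw [← neg_div, neg_sub]
  have hS1 : Tendsto (Sfun (n+1)) (nhdsWithin (0:ℝ) (Set.Ioi 0)) (nhdsWithin 1 {(1:ℝ)}ᶜ) := by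
    rw [tendsto_nhdsWithin_iff]
    constructor
    · have := (sfun_continuous (n+1)).tendsto 0
      rw [sfun_zero] at this
      exact this.mono_left nhdsWithin_le_nhds
    · filter_upwards [self_mem_nhdsWithin] with u hu
      exact ne_of_lt (sfun_lt_one n u hu)
  have hslope : Tendsto (fun y : ℝ => Real.log y / (y - 1)) (nhdsWithin 1 {(1:ℝ)}ᶜ) (nhds 1) := by
    have h := Real.hasDerivAt_log one_ne_zero
    rw [hasDerivAt_iff_tendsto_slope] at h
    simp only [slope_fun_def, Real.log_one, sub_zero, inv_one, vsub_eq_sub, smul_eq_mul] at h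
    refine h.congr fun y => ?_
    rw [inv_mul_eq_div]
  have h2 := hslope.comp hS1
  have h3 := h2.mul h1
  rw [one_mul] at h3
  refine h3.congr' ?_
  filter_upwards [self_mem_nhdsWithin] with u hu
  have hu : (0:ℝ) < u := hu
  have hne : Sfun (n+1) u - 1 ≠ 0 := sub_ne_zero.2 (ne_of_lt (sfun_lt_one n u hu))
  have hup : u ^ (n+1) ≠ 0 := by positivity
  show Real.log (Sfun (n+1) u) / (Sfun (n+1) u - 1) * ((Sfun (n+1) u - 1) / u ^ (n+1))
      = Real.log (Sfun (n+1) u) / u ^ (n+1)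
  field_simp

lemma key (n : ℕ) (ε : ℕ → ℝ) (hεpos : ∀ m, 0 < ε m)
    (hε0 : Tendsto ε atTop (nhds 0))
    (hmε : Tendsto (fun m : ℕ => (m:ℝ) * (ε m)^(n+1)) atTop (nhds 1))
    (c : ℝ) (hc : 0 ≤ c) :
    Tendsto (fun m : ℕ => (m:ℝ) * Real.log (Sfun (n+1) (c * ε m))) atTop
      (nhds (-(c^(n+1)) / (Nat.factorial (n+1) : ℝ))) := by
  rcases hc.eq_or_lt with h | h
  · subst h
    have : ∀ m : ℕ, (m:ℝ) * Real.log (Sfun (n+1) ((0:ℝ) * ε m)) = 0 := by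
      intro m; rw [zero_mul, sfun_zero, Real.log_one, mul_zero]
    rw [show -((0:ℝ)^(n+1)) / (Nat.factorial (n+1) : ℝ) = 0 by simp]
    exact tendsto_const_nhds.congr fun m => (this m).symm
  · have h1 : Tendsto (fun m => c * ε m) atTop (nhdsWithin (0:ℝ) (Set.Ioi 0)) := by
      rw [tendsto_nhdsWithin_iff]
      constructor
      · simpa using hε0.const_mul c
      · exact Eventually.of_forall fun m => mul_pos h (hεpos m)
    have h2 := (logS_tendsto n).comp h1
    have h3 := (hmε.mul h2).const_mul (c^(n+1))
    have heq : ∀ m : ℕ, c^(n+1) * (((m:ℝ) * (ε m)^(n+1)) *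
        (Real.log (Sfun (n+1) (c * ε m)) / (c * ε m)^(n+1)))
        = (m:ℝ) * Real.log (Sfun (n+1) (c * ε m)) := by
      intro m
      have hc' : c ^ (n+1) ≠ 0 := by positivity
      have he' : (ε m) ^ (n+1) ≠ 0 := by have := hεpos m; positivity
      rw [mul_pow]
      field_simp
    have hval : c^(n+1) * (1 * (-(1 / (Nat.factorial (n+1) : ℝ))))
        = -(c^(n+1)) / (Nat.factorial (n+1) : ℝ) := by ring
    rw [hval] at h3
    exact h3.congr heq


/-- `P(R_m > x) = (Γ(k,x)/Γ(k))^m` where `R_m` is the minimum of `m` i.i.d. `Gamma(k,1)`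
random variables. The survival function of `r_m^{1/k} M(m, t r_m^{-1/k})` at `x ≥ t` is
the ratio of survival functions of `R_m`, and it converges to `exp(-(x^k - t^k)/k!)`. -/
theorem stmt11 (k : ℕ) (hk : 1 ≤ k) (r : ℕ → ℝ) (hr : ∀ m, 0 < r m)
    (hlim : Tendsto (fun m : ℕ => r m / m) atTop (nhds 1))
    (t : ℝ) (ht : 0 ≤ t) (x : ℝ) (hx : t ≤ x) :
    Tendsto (fun m : ℕ =>
        (upperGamma k (x * r m ^ (-(1 : ℝ) / k)) / (Nat.factorial (k - 1) : ℝ)) ^ m /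
          (upperGamma k (t * r m ^ (-(1 : ℝ) / k)) / (Nat.factorial (k - 1) : ℝ)) ^ m)
      atTop (nhds (Real.exp (-(x ^ k - t ^ k) / (Nat.factorial k : ℝ)))) := by
  obtain ⟨n, rfl⟩ : ∃ n, k = n + 1 := ⟨k - 1, (Nat.succ_pred_eq_of_pos hk).symm⟩
  set ε : ℕ → ℝ := fun m => r m ^ (-(1 : ℝ) / ((n+1 : ℕ) : ℝ)) with hεdef
  have hεpos : ∀ m, 0 < ε m := fun m => Real.rpow_pos_of_pos (hr m) _
  have hrtop : Tendsto r atTop atTop := by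
    have h := Tendsto.pos_mul_atTop one_pos hlim tendsto_natCast_atTop_atTop
    refine h.congr' ?_
    filter_upwards [eventually_ge_atTop 1] with m hm
    have hm' : ((m:ℝ)) ≠ 0 := by positivity
    field_simp
  have hε0 : Tendsto ε atTop (nhds 0) := by
    have hy : (0:ℝ) < 1 / ((n+1 : ℕ) : ℝ) := by positivity
    have h := (tendsto_rpow_neg_atTop hy).comp hrtop
    refine h.congr fun m => ?_
    simp only [Function.comp, hεdef, neg_div]
  have hεk : ∀ m, (ε m) ^ (n+1) = (r m)⁻¹ := by
    intro m
    rw [hεdef]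
    rw [← Real.rpow_natCast (r m ^ (-(1 : ℝ) / ((n+1 : ℕ) : ℝ))) (n+1),
      ← Real.rpow_mul (hr m).le]
    have hne : ((n+1 : ℕ) : ℝ) ≠ 0 := by positivity
    rw [show (-(1 : ℝ) / ((n+1 : ℕ) : ℝ)) * ((n+1 : ℕ) : ℝ) = -1 by field_simp]
    rw [Real.rpow_neg_one]
  have hmε : Tendsto (fun m : ℕ => (m:ℝ) * (ε m) ^ (n+1)) atTop (nhds 1) := by
    have h := hlim.inv₀ one_ne_zero
    rw [inv_one] at h
    refine h.congr fun m => ?_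
    rw [inv_div, div_eq_mul_inv, hεk m]
  have hx0 : 0 ≤ x := le_trans ht hx
  have hX := key n ε hεpos hε0 hmε x hx0
  have hT := key n ε hεpos hε0 hmε t ht
  have hfun : ∀ m : ℕ,
      (upperGamma (n+1) (x * ε m) / (Nat.factorial (n+1-1) : ℝ)) ^ m /
        (upperGamma (n+1) (t * ε m) / (Nat.factorial (n+1-1) : ℝ)) ^ m
      = Real.exp ((m:ℝ) * Real.log (Sfun (n+1) (x * ε m))
          - (m:ℝ) * Real.log (Sfun (n+1) (t * ε m))) := by
    intro m
    have hxε : 0 ≤ x * ε m := mul_nonneg hx0 (hεpos m).le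
    have htε : 0 ≤ t * ε m := mul_nonneg ht (hεpos m).le
    have hfac : ((Nat.factorial n : ℝ)) ≠ 0 := by positivity
    have e1 : upperGamma (n+1) (x * ε m) / (Nat.factorial (n+1-1) : ℝ) = Sfun (n+1) (x * ε m) := by
      rw [Nat.add_sub_cancel, upperGamma_eq n _ hxε]
      field_simp
    have e2 : upperGamma (n+1) (t * ε m) / (Nat.factorial (n+1-1) : ℝ) = Sfun (n+1) (t * ε m) := by
      rw [Nat.add_sub_cancel, upperGamma_eq n _ htε]
      field_simp
    have pow_eq : ∀ (A : ℝ), 0 < A → A ^ m = Real.exp ((m:ℝ) * Real.log A) := by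
      intro A hA
      rw [Real.exp_nat_mul, Real.exp_log hA]
    rw [e1, e2, pow_eq _ (sfun_pos n _ hxε), pow_eq _ (sfun_pos n _ htε), ← Real.exp_sub]
  have hsub := hX.sub hT
  have hexp := (Real.continuous_exp.tendsto _).comp hsub
  have hval : Real.exp (-(x ^ (n+1)) / (Nat.factorial (n+1) : ℝ)
      - -(t ^ (n+1)) / (Nat.factorial (n+1) : ℝ))
      = Real.exp (-(x ^ (n+1) - t ^ (n+1)) / (Nat.factorial (n+1) : ℝ)) := by
    congr 1
    ring
  rw [hval] at hexp
  exact hexp.congr fun m => (hfun m).symm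
end

section
/- For k = 2, the expected number of one-records on a path of n nodes, E[X_{n,1}] = Σ_{i=0}^{n-1} ∫_0^∞ e^{-x} (Γ(2,x)/Γ(2))^i dx, satisfies E[X_{n,1}] ~ √(2πn) as n → ∞. -/
open MeasureTheory Real Set Filter Topology Asymptotics


/-- nonneg on Ici 0 from derivative -/
lemma nonneg_of_deriv {f f' : ℝ → ℝ} (hf : ∀ t : ℝ, -1 < t → HasDerivAt f (f' t) t)
    (h0 : f 0 = 0) (h' : ∀ t : ℝ, 0 ≤ t → 0 ≤ f' t) {t : ℝ} (ht : 0 ≤ t) : 0 ≤ f t := by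
  have hmono : MonotoneOn f (Ici (0:ℝ)) := by
    apply monotoneOn_of_deriv_nonneg (convex_Ici 0)
    · exact fun x hx => (hf x (by simp at hx; linarith)).continuousAt.continuousWithinAt
    · intro x hx
      rw [interior_Ici] at hx
      exact (hf x (by simp at hx; linarith)).differentiableAt.differentiableWithinAt
    · intro x hx
      rw [interior_Ici] at hx
      rw [(hf x (by simp at hx; linarith)).deriv]
      exact h' x (le_of_lt (by simpa using hx))
  have := hmono (self_mem_Ici) ht ht
  rwa [h0] at this

lemma log_deriv_aux (t : ℝ) (ht : -1 < t) : HasDerivAt (fun t : ℝ => Real.log (1 + t)) ((1+t)⁻¹) t := by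
  have h : HasDerivAt (fun t : ℝ => 1 + t) 1 t := (hasDerivAt_id t).const_add 1
  simpa using h.log (by linarith : (1:ℝ)+t ≠ 0)

lemma logA {t : ℝ} (ht : 0 ≤ t) : t - t^2/2 ≤ Real.log (1 + t) := by
  have := nonneg_of_deriv (f := fun t => Real.log (1+t) - t + t^2/2)
    (f' := fun t => (1+t)⁻¹ - 1 + t)
    (fun t ht => by
      have h1 := log_deriv_aux t ht
      have h2 : HasDerivAt (fun t : ℝ => t^2/2) t t := by
        simpa using ((hasDerivAt_pow 2 t).div_const 2)
      exact (h1.sub (hasDerivAt_id' t)).add h2)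
    (by simp)
    (fun t ht => by
      have h1 : (0:ℝ) < 1 + t := by linarith
      have h2 : 1 - t ≤ (1+t)⁻¹ := by
        rw [inv_eq_one_div, le_div_iff₀ h1]
        nlinarith
      linarith) ht
  linarith

lemma logB {t : ℝ} (ht : 0 ≤ t) : Real.log (1 + t) ≤ t - t^2/2 + t^3/3 := by
  have := nonneg_of_deriv (f := fun t => t - t^2/2 + t^3/3 - Real.log (1+t))
    (f' := fun t => 1 - t + t^2 - (1+t)⁻¹)
    (fun t ht => by
      have h1 := log_deriv_aux t ht
      have h2 : HasDerivAt (fun t : ℝ => t^2/2) t t := by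
        simpa using ((hasDerivAt_pow 2 t).div_const 2)
      have h3 : HasDerivAt (fun t : ℝ => t^3/3) (t^2) t := by
        exact ((hasDerivAt_pow 3 t).div_const 3).congr_deriv (by norm_num)
      exact (((hasDerivAt_id' t).sub h2).add h3).sub h1)
    (by simp)
    (fun t ht => by
      have h1 : (0:ℝ) < 1 + t := by linarith
      have h2 : (1+t)⁻¹ ≤ 1 - t + t^2 := by
        rw [inv_eq_one_div, div_le_iff₀ h1]
        nlinarith
      linarith) ht
  linarith

lemma logC {t : ℝ} (ht : 0 ≤ t) : Real.log (1 + t) ≤ 2 * (Real.sqrt (1 + t) - 1) := by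
  have h1 : (0:ℝ) < 1 + t := by linarith
  have h2 : Real.log (1 + t) = 2 * Real.log (Real.sqrt (1+t)) := by
    rw [Real.log_sqrt (by linarith)]; ring
  rw [h2]
  have := Real.log_le_sub_one_of_pos (Real.sqrt_pos.mpr h1)
  linarith

-- sublemma D
lemma logD {t : ℝ} (ht : 0 ≤ t) : Real.log (1 + t) - t ≤ -(t^2/(4*(1+t))) := by
  set s := Real.sqrt (1 + t) with hs
  have hs2 : s^2 = 1 + t := Real.sq_sqrt (by linarith)
  have hs1 : 1 ≤ s := by
    rw [hs, Real.le_sqrt one_pos.le (by linarith)]; nlinarith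
  have key : t^2/(4*(1+t)) ≤ (s-1)^2 := by
    rw [div_le_iff₀ (by positivity)]
    nlinarith
  have := logC ht
  nlinarith

-- exp form of the base
lemma base_eq {t : ℝ} (ht : 0 ≤ t) : (1 + t) * Real.exp (-t) = Real.exp (Real.log (1+t) - t) := by
  rw [Real.exp_sub, Real.exp_log (by linarith)]
  rw [Real.exp_neg]
  ring

lemma F_eq {n : ℕ} {t : ℝ} (ht : 0 ≤ t) :
    Real.exp (-t) * ((1 + t) * Real.exp (-t))^n = Real.exp (-t + n * (Real.log (1+t) - t)) := by
  rw [base_eq ht, ← Real.exp_nat_mul, ← Real.exp_add]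

-- domination
lemma F_le {n : ℕ} (hn : 1 ≤ n) {y : ℝ} (hy : 0 < y) :
    Real.exp (-((Real.sqrt n)⁻¹ * y) + n * (Real.log (1+(Real.sqrt n)⁻¹ * y) - (Real.sqrt n)⁻¹ * y))
      ≤ Real.exp (-(y^2/(4*(1+y)))) := by
  have hn1 : (1:ℝ) ≤ (n:ℝ) := by exact_mod_cast hn
  have hsn : (1:ℝ) ≤ Real.sqrt n := by
    rw [Real.le_sqrt one_pos.le (by positivity)]; nlinarith
  have hsnp : (0:ℝ) < Real.sqrt n := by linarith
  set c := (Real.sqrt n)⁻¹ with hc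
  have hcp : 0 < c := by positivity
  have hc1 : c ≤ 1 := by rw [hc]; exact inv_le_one_of_one_le₀ hsn
  set t := c * y with hts
  have htp : 0 < t := by positivity
  have hty : t ≤ y := by
    calc t = c * y := rfl
    _ ≤ 1 * y := by apply mul_le_mul_of_nonneg_right hc1 hy.le
    _ = y := one_mul y
  have hnt2 : (n:ℝ) * t^2 = y^2 := by
    have : c^2 = ((n:ℝ))⁻¹ := by
      rw [hc, inv_pow, Real.sq_sqrt (by positivity : (0:ℝ) ≤ (n:ℝ))]
    rw [hts, mul_pow, this]
    field_simp
  rw [Real.exp_le_exp]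
  have h1 : (n:ℝ) * (Real.log (1+t) - t) ≤ -(y^2/(4*(1+t))) := by
    have := logD htp.le
    have h2 : (n:ℝ) * (Real.log (1+t) - t) ≤ (n:ℝ) * (-(t^2/(4*(1+t)))) :=
      mul_le_mul_of_nonneg_left this (by positivity)
    calc (n:ℝ) * (Real.log (1+t) - t) ≤ (n:ℝ) * (-(t^2/(4*(1+t)))) := h2
    _ = -((n * t^2)/(4*(1+t))) := by ring
    _ = -(y^2/(4*(1+t))) := by rw [hnt2]
  have h3 : y^2/(4*(1+y)) ≤ y^2/(4*(1+t)) := by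
    apply div_le_div_of_nonneg_left (by positivity) (by positivity) (by linarith)
  have h4 : -t ≤ 0 := by linarith
  linarith

lemma c_tendsto : Tendsto (fun n : ℕ => (Real.sqrt n)⁻¹) atTop (𝓝 0) := by
  have h : Tendsto (fun n : ℕ => Real.sqrt ((n:ℝ)⁻¹)) atTop (𝓝 (Real.sqrt 0)) :=
    tendsto_inv_atTop_nhds_zero_nat.sqrt
  simp only [Real.sqrt_zero] at h
  refine h.congr fun n => ?_
  rw [Real.sqrt_inv]

lemma exponent_tendsto {y : ℝ} (hy : 0 < y) :
    Tendsto (fun n : ℕ => -((Real.sqrt n)⁻¹ * y)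
        + n * (Real.log (1 + (Real.sqrt n)⁻¹ * y) - (Real.sqrt n)⁻¹ * y))
      atTop (𝓝 (-(y^2/2))) := by
  have h1 : Tendsto (fun n : ℕ => -((Real.sqrt n)⁻¹ * y)) atTop (𝓝 0) := by
    have := (c_tendsto.mul_const y).neg
    simpa using this
  have h2 : Tendsto (fun n : ℕ =>
      (n:ℝ) * (Real.log (1 + (Real.sqrt n)⁻¹ * y) - (Real.sqrt n)⁻¹ * y)) atTop (𝓝 (-(y^2/2))) := by
    have hupper : Tendsto (fun n : ℕ => -(y^2/2) + (Real.sqrt n)⁻¹ * y^3/3) atTop (𝓝 (-(y^2/2))) := by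
      have := ((c_tendsto.mul_const (y^3)).div_const 3).const_add (-(y^2/2))
      simpa using this
    apply tendsto_of_tendsto_of_tendsto_of_le_of_le' tendsto_const_nhds hupper
    · filter_upwards [eventually_ge_atTop 1] with n hn
      have hn1 : (1:ℝ) ≤ (n:ℝ) := by exact_mod_cast hn
      have hsnp : (0:ℝ) < Real.sqrt n := Real.sqrt_pos.mpr (by linarith)
      set c := (Real.sqrt n)⁻¹ with hc
      have hcp : 0 < c := by positivity
      set t := c * y with hts
      have htp : 0 < t := by positivity
      have hnc2 : (n:ℝ) * c^2 = 1 := by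
        rw [hc, inv_pow, Real.sq_sqrt (by positivity : (0:ℝ) ≤ (n:ℝ))]
        field_simp
      have hnt2 : (n:ℝ) * t^2 = y^2 := by
        rw [hts, mul_pow, ← mul_assoc, hnc2, one_mul]
      have hA : -(t^2/2) ≤ Real.log (1+t) - t := by have := logA htp.le; linarith
      calc -(y^2/2) = (n:ℝ) * (-(t^2/2)) := by rw [show (n:ℝ) * (-(t^2/2)) = -((n:ℝ)*t^2)/2 by ring, hnt2]; ring
      _ ≤ (n:ℝ) * (Real.log (1+t) - t) := mul_le_mul_of_nonneg_left hA (by positivity)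
    · filter_upwards [eventually_ge_atTop 1] with n hn
      have hn1 : (1:ℝ) ≤ (n:ℝ) := by exact_mod_cast hn
      have hsnp : (0:ℝ) < Real.sqrt n := Real.sqrt_pos.mpr (by linarith)
      set c := (Real.sqrt n)⁻¹ with hc
      have hcp : 0 < c := by positivity
      set t := c * y with hts
      have htp : 0 < t := by positivity
      have hnc2 : (n:ℝ) * c^2 = 1 := by
        rw [hc, inv_pow, Real.sq_sqrt (by positivity : (0:ℝ) ≤ (n:ℝ))]
        field_simp
      have hnt2 : (n:ℝ) * t^2 = y^2 := by
        rw [hts, mul_pow, ← mul_assoc, hnc2, one_mul]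
      have hnt3 : (n:ℝ) * t^3 = c * y^3 := by
        rw [hts]
        have : (n:ℝ) * (c*y)^3 = ((n:ℝ) * c^2) * (c * y^3) := by ring
        rw [this, hnc2, one_mul]
      have hB : Real.log (1+t) - t ≤ -(t^2/2) + t^3/3 := by have := logB htp.le; linarith
      calc (n:ℝ) * (Real.log (1+t) - t) ≤ (n:ℝ) * (-(t^2/2) + t^3/3) :=
            mul_le_mul_of_nonneg_left hB (by positivity)
      _ = -((n:ℝ)*t^2)/2 + ((n:ℝ)*t^3)/3 := by ring
      _ = -(y^2/2) + c * y^3/3 := by rw [hnt2, hnt3]; ring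
  have := h1.add h2
  simpa using this

noncomputable def itg (n : ℕ) (x : ℝ) : ℝ := Real.exp (-x) * ((1 + x) * Real.exp (-x)) ^ n


lemma sqrt_mul_integral {n : ℕ} (hn : 1 ≤ n) :
    Real.sqrt n * ∫ x in Ioi (0:ℝ), itg n x
      = ∫ y in Ioi (0:ℝ), itg n ((Real.sqrt n)⁻¹ * y) := by
  have hn1 : (1:ℝ) ≤ (n:ℝ) := by exact_mod_cast hn
  have hsnp : (0:ℝ) < Real.sqrt n := Real.sqrt_pos.mpr (by linarith)
  rw [integral_comp_mul_left_Ioi (itg n) 0 (inv_pos.mpr hsnp)]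
  simp [smul_eq_mul]

lemma bound_integrable : IntegrableOn (fun y : ℝ => Real.exp (-(y^2/(4*(1+y))))) (Ioi (0:ℝ)) := by
  apply Integrable.mono' ((exp_neg_integrableOn_Ioi 0 (by norm_num : (0:ℝ) < 8⁻¹)).const_mul
    (Real.exp 8⁻¹))
  · apply Measurable.aestronglyMeasurable
    apply Real.measurable_exp.comp
    apply Measurable.neg
    exact (measurable_id.pow_const 2).div ((measurable_const.add measurable_id).const_mul 4)
  · rw [ae_restrict_iff' measurableSet_Ioi]
    filter_upwards with y hy
    rw [Real.norm_of_nonneg (Real.exp_nonneg _), ← Real.exp_add]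
    rw [Real.exp_le_exp]
    have h1 : (0:ℝ) < 1 + y := by simp at hy; linarith
    have : (y-1)/8 ≤ y^2/(4*(1+y)) := by
      rw [div_le_div_iff₀ (by norm_num) (by positivity)]
      nlinarith
    linarith

lemma key_dct : Tendsto (fun n : ℕ => ∫ y in Ioi (0:ℝ), itg (n+1) ((Real.sqrt ((n:ℝ)+1))⁻¹ * y))
    atTop (𝓝 (Real.sqrt (π/(1/2))/2)) := by
  rw [← integral_gaussian_Ioi (1/2)]
  apply tendsto_integral_of_dominated_convergence (fun y => Real.exp (-(y^2/(4*(1+y)))))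
  · intro n
    apply Continuous.aestronglyMeasurable
    unfold itg
    fun_prop
  · exact bound_integrable
  · intro n
    rw [ae_restrict_iff' measurableSet_Ioi]
    filter_upwards with y hy
    rw [mem_Ioi] at hy
    have hcast : ((n:ℝ)+1) = ((n+1 : ℕ) : ℝ) := by push_cast; ring
    have ht : 0 ≤ (Real.sqrt ((n:ℝ)+1))⁻¹ * y := by positivity
    unfold itg
    rw [F_eq ht, Real.norm_of_nonneg (Real.exp_nonneg _), hcast]
    exact F_le (Nat.le_add_left 1 n) hy
  · rw [ae_restrict_iff' measurableSet_Ioi]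
    filter_upwards with y hy
    rw [mem_Ioi] at hy
    have hlim := (exponent_tendsto hy).comp (tendsto_add_atTop_nat 1)
    have h2 : Tendsto (fun n : ℕ => Real.exp (-((Real.sqrt ((n:ℝ)+1))⁻¹ * y)
        + ((n:ℝ)+1) * (Real.log (1 + (Real.sqrt ((n:ℝ)+1))⁻¹ * y) - (Real.sqrt ((n:ℝ)+1))⁻¹ * y)))
        atTop (𝓝 (Real.exp (-(y^2/2)))) := by
      apply (Real.continuous_exp.tendsto _).comp
      refine hlim.congr fun n => ?_
      simp only [Function.comp_apply]
      push_cast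
      ring
    rw [show -(1/2:ℝ)*y^2 = -(y^2/2) from by ring]
    refine h2.congr fun n => ?_
    unfold itg
    rw [F_eq (by positivity : (0:ℝ) ≤ (Real.sqrt ((n:ℝ)+1))⁻¹ * y)]
    congr 2
    push_cast
    ring

lemma sqrtn_a : Tendsto (fun n : ℕ => Real.sqrt n * ∫ x in Ioi (0:ℝ), itg n x)
    atTop (𝓝 (Real.sqrt (π/(1/2))/2)) := by
  rw [← tendsto_add_atTop_iff_nat 1]
  refine key_dct.congr fun n => ?_
  have h := (sqrt_mul_integral (n := n+1) (Nat.le_add_left 1 n)).symm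
  push_cast at h ⊢
  exact h

noncomputable def gseq (n : ℕ) : ℝ := Real.sqrt (2*π*((n:ℝ)+1)) - Real.sqrt (2*π*n)

lemma gseq_sum (n : ℕ) : ∑ i ∈ Finset.range n, gseq i = Real.sqrt (2*π*n) := by
  have h := Finset.sum_range_sub (fun i : ℕ => Real.sqrt (2*π*(i:ℝ))) n
  have h2 : ∀ i : ℕ, gseq i = Real.sqrt (2*π*((i+1:ℕ):ℝ)) - Real.sqrt (2*π*(i:ℝ)) := by
    intro i; unfold gseq; push_cast; ring_nf
  calc ∑ i ∈ Finset.range n, gseq i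
      = ∑ i ∈ Finset.range n, (Real.sqrt (2*π*((i+1:ℕ):ℝ)) - Real.sqrt (2*π*(i:ℝ))) :=
        Finset.sum_congr rfl (fun i _ => h2 i)
  _ = Real.sqrt (2*π*(n:ℝ)) - Real.sqrt (2*π*((0:ℕ):ℝ)) := h
  _ = Real.sqrt (2*π*(n:ℝ)) := by norm_num

lemma gseq_pos (n : ℕ) : 0 < gseq n := by
  have : 2*π*(n:ℝ) < 2*π*((n:ℝ)+1) := by nlinarith [pi_pos]
  exact sub_pos.mpr (Real.sqrt_lt_sqrt (by positivity) this)

lemma sqrtn_g : Tendsto (fun n : ℕ => Real.sqrt n * gseq n)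
    atTop (𝓝 (Real.sqrt (π/(1/2))/2)) := by
  have h1 : Tendsto (fun n : ℕ => ((n:ℝ)+1)/n) atTop (𝓝 1) := by
    have h := (tendsto_one_div_atTop_nhds_zero_nat).const_add (1:ℝ)
    rw [add_zero] at h
    apply (h.congr' ?_)
    filter_upwards [eventually_ge_atTop 1] with n hn
    have hne : (n:ℝ) ≠ 0 := by
      have : (1:ℝ) ≤ (n:ℝ) := by exact_mod_cast hn
      linarith
    field_simp
  have h2 : Tendsto (fun n : ℕ => Real.sqrt (2*π) * (Real.sqrt (((n:ℝ)+1)/n) + 1)⁻¹)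
      atTop (𝓝 (Real.sqrt (2*π) * (1 + 1)⁻¹)) := by
    have hs : Tendsto (fun n : ℕ => Real.sqrt (((n:ℝ)+1)/n) + 1) atTop (𝓝 (1+1)) := by
      have := h1.sqrt
      rw [Real.sqrt_one] at this
      exact this.add tendsto_const_nhds
    exact (hs.inv₀ (by norm_num)).const_mul _
  rw [show π/(1/2) = 2*π by ring]
  have hL : Real.sqrt (2*π)/2 = Real.sqrt (2*π) * (1+1)⁻¹ := by
    rw [show ((1:ℝ)+1)⁻¹ = 1/2 by norm_num]; ring
  rw [hL]
  refine h2.congr' ?_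
  filter_upwards [eventually_ge_atTop 1] with n hn
  have hn1 : (1:ℝ) ≤ (n:ℝ) := by exact_mod_cast hn
  have hs0 : (0:ℝ) < Real.sqrt n := Real.sqrt_pos.mpr (by linarith)
  have ht0 : (0:ℝ) < Real.sqrt ((n:ℝ)+1) := Real.sqrt_pos.mpr (by linarith)
  set s := Real.sqrt (n:ℝ)
  set t := Real.sqrt ((n:ℝ)+1)
  have hs2 : s^2 = (n:ℝ) := Real.sq_sqrt (by linarith)
  have ht2 : t^2 = (n:ℝ)+1 := Real.sq_sqrt (by linarith)
  have hdiv : Real.sqrt (((n:ℝ)+1)/n) = t/s := Real.sqrt_div (by linarith) _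
  rw [hdiv]
  unfold gseq
  rw [Real.sqrt_mul (by positivity) ((n:ℝ)+1), Real.sqrt_mul (by positivity) (n:ℝ)]
  rw [show s * (Real.sqrt (2*π) * t - Real.sqrt (2*π) * s) = Real.sqrt (2*π) * (s*(t-s)) by ring]
  congr 1
  rw [div_add_one hs0.ne', inv_div, div_eq_iff (by positivity)]
  nlinarith

lemma sqrt2pin_atTop : Tendsto (fun n : ℕ => Real.sqrt (2*π*(n:ℝ))) atTop atTop := by
  have h1 : Tendsto (fun x : ℝ => Real.sqrt x) atTop atTop :=
    (tendsto_rpow_atTop (by norm_num : (0:ℝ) < 1/2)).congr fun x => (Real.sqrt_eq_rpow x).symm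
  have h2 : Tendsto (fun n : ℕ => 2*π*(n:ℝ)) atTop atTop :=
    (tendsto_natCast_atTop_atTop).const_mul_atTop (by positivity)
  exact h1.comp h2

/-- For `k = 2`, `E[X_{n,1}] = ∑_{i=0}^{n-1} ∫_0^∞ e^{-x} ((1+x)e^{-x})^i dx ~ √(2πn)`. -/
theorem stmt14 :
    Tendsto (fun n : ℕ =>
        (∑ i ∈ Finset.range n, ∫ x in Set.Ioi (0 : ℝ),
            Real.exp (-x) * ((1 + x) * Real.exp (-x)) ^ i) / Real.sqrt (2 * π * n))
      atTop (nhds 1) := by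
  have hLpos : 0 < Real.sqrt (π/(1/2))/2 :=
    div_pos (Real.sqrt_pos.mpr (by positivity)) two_pos
  have hratio : Tendsto (fun n : ℕ => (∫ x in Ioi (0:ℝ), itg n x) / gseq n) atTop (𝓝 1) := by
    have h := sqrtn_a.div sqrtn_g hLpos.ne'
    rw [div_self hLpos.ne'] at h
    refine h.congr' ?_
    filter_upwards [eventually_ge_atTop 1] with n hn
    have hn1 : (1:ℝ) ≤ (n:ℝ) := by exact_mod_cast hn
    have hs0 : (0:ℝ) < Real.sqrt n := Real.sqrt_pos.mpr (by linarith)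
    simp only [Pi.div_apply]
    rw [mul_div_mul_left _ _ hs0.ne']
  have hlo : (fun n : ℕ => (∫ x in Ioi (0:ℝ), itg n x) - gseq n) =o[atTop] gseq := by
    have h0 : Tendsto (fun n : ℕ => (∫ x in Ioi (0:ℝ), itg n x)/gseq n - 1) atTop (𝓝 0) := by
      simpa using hratio.sub_const 1
    have h1 : (fun n : ℕ => (∫ x in Ioi (0:ℝ), itg n x)/gseq n - 1) =o[atTop]
        (fun _ : ℕ => (1:ℝ)) := (isLittleO_one_iff ℝ).mpr h0
    have h2 := h1.mul_isBigO (isBigO_refl gseq atTop)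
    refine h2.congr (fun n => ?_) (fun n => one_mul _)
    rw [sub_mul, div_mul_cancel₀ _ (gseq_pos n).ne', one_mul]
  have htop : Tendsto (fun n : ℕ => ∑ i ∈ Finset.range n, gseq i) atTop atTop :=
    sqrt2pin_atTop.congr fun n => (gseq_sum n).symm
  have hsum := hlo.sum_range (fun i => (gseq_pos i).le) htop
  have hsum2 : (fun n : ℕ => (∑ i ∈ Finset.range n, ∫ x in Ioi (0:ℝ), itg i x)
      - Real.sqrt (2*π*n)) =o[atTop] (fun n : ℕ => Real.sqrt (2*π*(n:ℝ))) := by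
    refine hsum.congr (fun n => ?_) (fun n => gseq_sum n)
    rw [Finset.sum_sub_distrib, gseq_sum]
  have h3 := hsum2.tendsto_div_nhds_zero
  have h4 : Tendsto (fun n : ℕ => ((∑ i ∈ Finset.range n, ∫ x in Ioi (0:ℝ), itg i x)
      - Real.sqrt (2*π*n)) / Real.sqrt (2*π*(n:ℝ)) + 1) atTop (𝓝 1) := by
    simpa using h3.add_const 1
  refine h4.congr' ?_
  filter_upwards [eventually_ge_atTop 1] with n hn
  have hn1 : (1:ℝ) ≤ (n:ℝ) := by exact_mod_cast hn
  have hs : (0:ℝ) < Real.sqrt (2*π*(n:ℝ)) := Real.sqrt_pos.mpr (by positivity)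
  rw [sub_div, div_self hs.ne', sub_add_cancel]
  rfl
end

section
/- Let k ≥ 1 and let Y ~ Gamma(k,1), and conditionally on Y, let Z ~ Poisson(Y); set W = min(Z, k). Then E[W] = k(1 - binomial(2k,k)/4^k). -/
open MeasureTheory Real Set

namespace Stmt16Aux

open Finset

lemma central_double (n : ℕ) : (2*n+2).choose (n+1) = 2 * (2*n+1).choose (n+1) := by
  have h1 : (2*n+2).choose (n+1) = (2*n+1).choose n + (2*n+1).choose (n+1) :=
    Nat.choose_succ_succ' (2*n+1) n ▸ by
      have := Nat.choose_succ_succ (2*n+1) n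
      simpa [Nat.succ_eq_add_one] using this
  have h2 : (2*n+1).choose n = (2*n+1).choose (n+1) := by
    have := Nat.choose_symm (show n ≤ 2*n+1 by omega)
    simpa [show 2*n+1-n = n+1 by omega] using this.symm
  omega

lemma idA (n : ℕ) : ∑ i ∈ range (n+1), ((n+i).choose i : ℝ) * (1/2)^i = 2^n := by
  induction n with
  | zero => simp
  | succ n ih =>
    set S := ∑ i ∈ range (n+2), ((n+1+i).choose i : ℝ) * (1/2)^i with hS
    have peel : S = (∑ j ∈ range (n+1), ((n+1+(j+1)).choose (j+1) : ℝ) * (1/2)^(j+1)) + 1 := by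
      rw [hS, Finset.sum_range_succ']
      simp
    have pascal : ∀ j : ℕ, (n+1+(j+1)).choose (j+1) = (n+1+j).choose j + (n+1+j).choose (j+1) := by
      intro j
      have := Nat.choose_succ_succ (n+1+j) j
      simpa [Nat.succ_eq_add_one, show n+1+j+1 = n+1+(j+1) by ring] using this
    have split : S = (∑ j ∈ range (n+1), ((n+1+j).choose j : ℝ) * (1/2)^(j+1))
        + (∑ j ∈ range (n+1), ((n+1+j).choose (j+1) : ℝ) * (1/2)^(j+1)) + 1 := by
      rw [peel, ← Finset.sum_add_distrib]
      congr 1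
      refine Finset.sum_congr rfl fun j _ => ?_
      rw [pascal j]; push_cast; ring
    have halfS : ∑ j ∈ range (n+1), ((n+1+j).choose j : ℝ) * (1/2)^(j+1)
        = (1/2) * (S - ((2*n+2).choose (n+1) : ℝ) * (1/2)^(n+1)) := by
      have htop : S = (∑ j ∈ range (n+1), ((n+1+j).choose j : ℝ) * (1/2)^j)
          + ((2*n+2).choose (n+1) : ℝ) * (1/2)^(n+1) := by
        rw [hS, Finset.sum_range_succ, show n+1+(n+1) = 2*n+2 by ring]
      have e : ∑ j ∈ range (n+1), ((n+1+j).choose j : ℝ) * (1/2)^(j+1)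
          = (1/2) * ∑ j ∈ range (n+1), ((n+1+j).choose j : ℝ) * (1/2)^j := by
        rw [Finset.mul_sum]
        exact Finset.sum_congr rfl fun j _ => by ring
      rw [e]; linarith
    have second : ∑ j ∈ range (n+1), ((n+1+j).choose (j+1) : ℝ) * (1/2)^(j+1)
        = 2^n + ((2*n+1).choose (n+1) : ℝ) * (1/2)^(n+1) - 1 := by
      have hT : ∑ i ∈ range (n+2), ((n+i).choose i : ℝ) * (1/2)^i
          = 2^n + ((2*n+1).choose (n+1) : ℝ) * (1/2)^(n+1) := by
        rw [Finset.sum_range_succ, ih, show n+(n+1) = 2*n+1 by ring]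
      have hT' : ∑ i ∈ range (n+2), ((n+i).choose i : ℝ) * (1/2)^i
          = (∑ j ∈ range (n+1), ((n+(j+1)).choose (j+1) : ℝ) * (1/2)^(j+1)) + 1 := by
        rw [Finset.sum_range_succ']
        simp
      have e : ∀ j ∈ range (n+1), ((n+(j+1)).choose (j+1) : ℝ) * (1/2)^(j+1)
          = ((n+1+j).choose (j+1) : ℝ) * (1/2)^(j+1) := by
        intro j _; rw [show n+(j+1) = n+1+j by ring]
      rw [Finset.sum_congr rfl e] at hT'
      linarith
    have hc : ((2*n+2).choose (n+1) : ℝ) = 2 * ((2*n+1).choose (n+1) : ℝ) := by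
      exact_mod_cast congrArg (Nat.cast : ℕ → ℝ) (central_double n)
    have hc' : ((2*n+2).choose (n+1) : ℝ) * (1/2)^(n+1)
        = 2 * (((2*n+1).choose (n+1) : ℝ) * (1/2)^(n+1)) := by rw [hc]; ring
    have hp : (2:ℝ)^(n+1) = 2 * 2^n := by ring
    have : S = 2^(n+1) := by
      rw [halfS, second] at split
      linarith
    simpa [hS] using this

lemma idD (m : ℕ) : ∑ z ∈ range (m+1), (((m:ℝ)+1) - z) * ((m+z).choose z : ℝ) * (1/2)^(m+1+z)
    = ((m:ℝ)+1) * ((2*m+2).choose (m+1) : ℝ) / 4^(m+1) := by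
  have base : ∑ z ∈ range (m+1), ((m+z).choose z : ℝ) * (1/2)^z = 2^m := idA m
  have hmul : ∀ j : ℕ, ((j:ℝ)+1) * ((m+(j+1)).choose (j+1) : ℝ)
      = ((m:ℝ)+1) * ((m+1+j).choose j : ℝ) := by
    intro j
    have h := Nat.choose_succ_right_eq (m+1+j) j
    have h2 : (m+1+j).choose (j+1) * (j+1) = (m+1+j).choose j * (m+1) := by
      simpa [show m+1+j-j = m+1 by omega] using h
    have := congrArg (Nat.cast : ℕ → ℝ) h2
    push_cast at this
    rw [show m+(j+1) = m+1+j by ring]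
    linarith
  have moment : ∑ z ∈ range (m+1), (z:ℝ) * ((m+z).choose z : ℝ) * (1/2)^z
      = ((m:ℝ)+1) * (1/2) * ∑ j ∈ range m, ((m+1+j).choose j : ℝ) * (1/2)^j := by
    rw [Finset.sum_range_succ']
    simp only [Nat.cast_zero, zero_mul, pow_zero, mul_one, add_zero]
    rw [Finset.mul_sum]
    refine Finset.sum_congr rfl fun j _ => ?_
    push_cast
    rw [show ((j:ℝ)+1) * ((m+(j+1)).choose (j+1) : ℝ) * (1/2)^(j+1)
        = (((j:ℝ)+1) * ((m+(j+1)).choose (j+1) : ℝ)) * (1/2)^(j+1) by ring, hmul j]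
    ring
  have truncA : ∑ j ∈ range m, ((m+1+j).choose j : ℝ) * (1/2)^j
      = 2^(m+1) - ((2*m+2).choose (m+1) : ℝ) * (1/2)^m := by
    have h := idA (m+1)
    rw [Finset.sum_range_succ, Finset.sum_range_succ] at h
    have hc : ((m+1+m).choose m : ℝ) = ((2*m+2).choose (m+1) : ℝ) / 2 := by
      have h2 : (2*m+1).choose m = (2*m+1).choose (m+1) := by
        have := Nat.choose_symm (show m ≤ 2*m+1 by omega)
        simpa [show 2*m+1-m = m+1 by omega] using this.symm
      have := central_double m
      rw [show m+1+m = 2*m+1 by ring]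
      field_simp
      exact_mod_cast by omega
    rw [hc, show m+1+(m+1) = 2*m+2 by ring] at h
    have hpow : ((2*m+2).choose (m+1) : ℝ) / 2 * (1/2)^m
        = ((2*m+2).choose (m+1) : ℝ) * (1/2)^(m+1) := by ring
    rw [hpow] at h
    linarith
  have expand : ∑ z ∈ range (m+1), (((m:ℝ)+1) - z) * ((m+z).choose z : ℝ) * (1/2)^(m+1+z)
      = (1/2)^(m+1) * (((m:ℝ)+1) * ∑ z ∈ range (m+1), ((m+z).choose z : ℝ) * (1/2)^z
        - ∑ z ∈ range (m+1), (z:ℝ) * ((m+z).choose z : ℝ) * (1/2)^z) := by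
    simp only [Finset.mul_sum, mul_sub, ← Finset.sum_sub_distrib]
    refine Finset.sum_congr rfl fun z _ => ?_
    rw [pow_add]
    ring
  rw [expand, base, moment, truncA]
  have h4 : ((4:ℝ))^(m+1) = 2^(m+1) * 2^(m+1) := by
    rw [show (4:ℝ) = 2*2 by norm_num, mul_pow]
  rw [h4]
  have h2 : ((2:ℝ))^(m+1) ≠ 0 := by positivity
  field_simp
  have h5 : ((1:ℝ)/2)^m * 2^m = 1 := by rw [← mul_pow]; norm_num
  linear_combination (((2*m+2).choose (m+1) : ℝ) * 2 * (((1:ℝ)/2)^m * 2^m + 1)) * h5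

lemma integral_piece (m z : ℕ) :
    (∫ y in Set.Ioi (0:ℝ), y ^ m * Real.exp (-y) / (Nat.factorial m : ℝ) *
      (Real.exp (-y) * y ^ z / (Nat.factorial z : ℝ) * ((min z (m+1) : ℕ) : ℝ)))
    = ((min z (m+1) : ℕ) : ℝ) * (((m+z).choose z : ℝ)) * (1/2)^(m+1+z) := by
  have key : ∀ y ∈ Set.Ioi (0:ℝ),
      y ^ m * Real.exp (-y) / (Nat.factorial m : ℝ) *
        (Real.exp (-y) * y ^ z / (Nat.factorial z : ℝ) * ((min z (m+1) : ℕ) : ℝ))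
      = (((min z (m+1) : ℕ) : ℝ) / ((Nat.factorial m : ℝ) * (Nat.factorial z : ℝ))) *
        (y ^ (((m+z+1 : ℕ) : ℝ) - 1) * Real.exp (-(2 * y))) := by
    intro y hy
    have hy0 : (0:ℝ) < y := hy
    have h1 : ((m+z+1 : ℕ) : ℝ) - 1 = ((m+z : ℕ) : ℝ) := by push_cast; ring
    rw [h1, Real.rpow_natCast]
    have h2 : Real.exp (-y) * Real.exp (-y) = Real.exp (-(2*y)) := by
      rw [← Real.exp_add]; ring_nf
    field_simp
    rw [pow_add, show -(y*2) = -(2*y) by ring, ← h2]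
    ring
  rw [MeasureTheory.setIntegral_congr_fun measurableSet_Ioi key,
    integral_const_mul,
    integral_rpow_mul_exp_neg_mul_Ioi (by positivity : (0:ℝ) < ((m+z+1:ℕ):ℝ)) two_pos]
  have h3 : Real.Gamma ((m+z+1:ℕ):ℝ) = ((m+z).factorial : ℝ) := by
    rw [show ((m+z+1:ℕ):ℝ) = ((m+z:ℕ):ℝ) + 1 by push_cast; ring]
    exact Real.Gamma_nat_eq_factorial _
  rw [h3, show ((1:ℝ)/2) ^ ((m+z+1:ℕ):ℝ) = ((1:ℝ)/2) ^ (m+z+1 : ℕ) from Real.rpow_natCast _ _]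
  have hfac : ((m+z).choose z : ℝ) * ((m.factorial : ℝ) * (z.factorial : ℝ)) = ((m+z).factorial : ℝ) := by
    exact_mod_cast congrArg (Nat.cast : ℕ → ℝ) (by
      rw [← Nat.add_choose_mul_factorial_mul_factorial m z]; ring)
  have hm : (m.factorial : ℝ) ≠ 0 := by positivity
  have hz : (z.factorial : ℝ) ≠ 0 := by positivity
  rw [show m+1+z = m+z+1 by ring]
  field_simp
  linear_combination (-(((min z (m+1) : ℕ) : ℝ))) * hfac

lemma integrable_piece (m z : ℕ) :
    IntegrableOn (fun y : ℝ => y ^ m * Real.exp (-y) / (Nat.factorial m : ℝ) *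
      (Real.exp (-y) * y ^ z / (Nat.factorial z : ℝ) * ((min z (m+1) : ℕ) : ℝ)))
      (Set.Ioi (0:ℝ)) := by
  have hfun : (fun y : ℝ => y ^ m * Real.exp (-y) / (Nat.factorial m : ℝ) *
      (Real.exp (-y) * y ^ z / (Nat.factorial z : ℝ) * ((min z (m+1) : ℕ) : ℝ)))
      = fun y : ℝ => (((min z (m+1) : ℕ) : ℝ) / ((Nat.factorial m : ℝ) * (Nat.factorial z : ℝ)))
        * (y ^ (m+z) * Real.exp (-(2*y))) := by
    funext y
    have h2 : Real.exp (-y) * Real.exp (-y) = Real.exp (-(2*y)) := by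
      rw [← Real.exp_add]; ring_nf
    field_simp
    rw [pow_add, show -(y*2) = -(2*y) by ring, ← h2]
    ring
  rw [hfun]
  apply Integrable.const_mul
  have hbase : IntegrableOn (fun x : ℝ => Real.exp (-x) * x ^ (((m+z+1:ℕ):ℝ) - 1))
      (Set.Ioi (0:ℝ)) := Real.GammaIntegral_convergent (by positivity)
  apply hbase.mono'
  · exact (((continuous_pow (m+z)).mul (by continuity)).aestronglyMeasurable)
  · filter_upwards [ae_restrict_mem measurableSet_Ioi] with y hy
    have hy0 : (0:ℝ) < y := hy
    rw [Real.norm_eq_abs, abs_of_nonneg (by positivity),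
      show ((m+z+1:ℕ):ℝ) - 1 = ((m+z:ℕ):ℝ) by push_cast; ring, Real.rpow_natCast]
    have hexp : Real.exp (-(2*y)) ≤ Real.exp (-y) := Real.exp_le_exp.2 (by linarith)
    calc y ^ (m+z) * Real.exp (-(2*y)) ≤ y ^ (m+z) * Real.exp (-y) := by
          exact mul_le_mul_of_nonneg_left hexp (by positivity)
      _ = Real.exp (-y) * y ^ (m+z) := by ring

lemma choose_symm' (m z : ℕ) : (m+z).choose z = (z+m).choose m := by
  have := Nat.choose_symm (show z ≤ m+z by omega)
  rw [show m+z-z = m by omega] at this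
  rw [← this, Nat.add_comm]

end Stmt16Aux

open Stmt16Aux Finset in
/-- Let `Y ~ Gamma(k,1)` and, given `Y = y`, `Z ~ Poisson(y)`; set `W = min(Z,k)`.
Then `E[W] = ∫_0^∞ (y^{k-1}e^{-y}/(k-1)!) ∑_z min(z,k) e^{-y} y^z/z! dy
= k (1 - C(2k,k)/4^k)`. -/
theorem stmt16 (k : ℕ) (hk : 1 ≤ k) :
    (∫ y in Set.Ioi (0 : ℝ),
        y ^ (k - 1) * Real.exp (-y) / (Nat.factorial (k - 1) : ℝ) *
          ∑' z : ℕ, Real.exp (-y) * y ^ z / (Nat.factorial z : ℝ) * (min z k : ℕ))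
      = k * (1 - (Nat.choose (2 * k) k : ℝ) / 4 ^ k) := by
  obtain ⟨m, rfl⟩ : ∃ m, k = m + 1 := ⟨k - 1, by omega⟩
  simp only [Nat.add_sub_cancel]
  have hr : ‖(1/2 : ℝ)‖ < 1 := by rw [Real.norm_eq_abs]; rw [abs_of_nonneg]; norm_num; norm_num
  -- the negative binomial pmf
  have hp : HasSum (fun z : ℕ => ((m+z).choose z : ℝ) * (1/2)^(m+1+z)) 1 := by
    have h0 := hasSum_choose_mul_geometric_of_norm_lt_one (𝕜 := ℝ) m hr
    have h1 := h0.mul_left ((1/2:ℝ)^(m+1))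
    have h2 : (fun z : ℕ => ((1/2:ℝ)^(m+1)) * (((z+m).choose m : ℝ) * (1/2)^z))
        = fun z : ℕ => ((m+z).choose z : ℝ) * (1/2)^(m+1+z) := by
      funext z
      rw [choose_symm' m z, pow_add]
      ring
    rw [h2] at h1
    have e : (1/2:ℝ)^(m+1) * (1 / (1 - 1/2)^(m+1)) = 1 := by
      rw [show (1:ℝ) - 1/2 = 1/2 by norm_num]; exact mul_one_div_cancel (pow_ne_zero _ (by norm_num))
    rw [e] at h1; exact h1
  -- summability of the integral values
  have hsymmle : ∀ z : ℕ, ((min z (m+1) : ℕ) : ℝ) * (((m+z).choose z : ℝ)) * (1/2)^(m+1+z)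
      ≤ (((m:ℝ)+1) * (1/2)^(m+1)) * (((z+m).choose m : ℝ) * (1/2)^z) := by
    intro z
    rw [choose_symm' m z, pow_add]
    have h1 : ((min z (m+1) : ℕ) : ℝ) ≤ (m:ℝ)+1 := by
      have : min z (m+1) ≤ m+1 := min_le_right _ _
      exact_mod_cast this
    have h2 : (0:ℝ) ≤ ((z+m).choose m : ℝ) * ((1/2:ℝ)^(m+1) * (1/2)^z) := by positivity
    calc ((min z (m+1) : ℕ) : ℝ) * (((z+m).choose m : ℝ)) * ((1/2:ℝ)^(m+1) * (1/2)^z)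
        = ((min z (m+1) : ℕ) : ℝ) * (((z+m).choose m : ℝ) * ((1/2:ℝ)^(m+1) * (1/2)^z)) := by ring
      _ ≤ ((m:ℝ)+1) * (((z+m).choose m : ℝ) * ((1/2:ℝ)^(m+1) * (1/2)^z)) :=
          mul_le_mul_of_nonneg_right h1 h2
      _ = (((m:ℝ)+1) * (1/2)^(m+1)) * (((z+m).choose m : ℝ) * (1/2)^z) := by ring
  have hsumV : Summable (fun z : ℕ =>
      ((min z (m+1) : ℕ) : ℝ) * (((m+z).choose z : ℝ)) * (1/2)^(m+1+z)) := by
    apply Summable.of_nonneg_of_le (fun z => by positivity) hsymmle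
    exact ((summable_choose_mul_geometric_of_norm_lt_one m hr).mul_left _)
  -- swap integral and sum
  simp_rw [← tsum_mul_left]
  rw [← MeasureTheory.integral_tsum_of_summable_integral_norm
    (fun z => integrable_piece m z) ?_]
  · -- evaluate
    have hval : ∀ z : ℕ,
        (∫ y in Set.Ioi (0:ℝ), y ^ m * Real.exp (-y) / (Nat.factorial m : ℝ) *
          (Real.exp (-y) * y ^ z / (Nat.factorial z : ℝ) * ((min z (m+1) : ℕ) : ℝ)))
        = ((min z (m+1) : ℕ) : ℝ) * (((m+z).choose z : ℝ)) * (1/2)^(m+1+z) :=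
      integral_piece m
    rw [tsum_congr hval]
    -- now compute the tsum
    have hVeq : ∀ z : ℕ,
        ((min z (m+1) : ℕ) : ℝ) * (((m+z).choose z : ℝ)) * (1/2)^(m+1+z)
        = ((m:ℝ)+1) * (((m+z).choose z : ℝ) * (1/2)^(m+1+z))
          - ((((m:ℝ)+1) - ((min z (m+1) : ℕ) : ℝ)) * (((m+z).choose z : ℝ) * (1/2)^(m+1+z))) := by
      intro z; ring
    have hzero : ∀ z ∉ range (m+1),
        ((((m:ℝ)+1) - ((min z (m+1) : ℕ) : ℝ)) * (((m+z).choose z : ℝ) * (1/2)^(m+1+z))) = 0 := by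
      intro z hz
      rw [Finset.mem_range, not_lt] at hz
      rw [min_eq_right hz]
      push_cast
      ring
    have hsumh : Summable (fun z : ℕ =>
        ((((m:ℝ)+1) - ((min z (m+1) : ℕ) : ℝ)) * (((m+z).choose z : ℝ) * (1/2)^(m+1+z)))) :=
      summable_of_ne_finset_zero (s := range (m+1)) hzero
    rw [tsum_congr hVeq, Summable.tsum_sub (hp.summable.mul_left _) hsumh, tsum_mul_left, hp.tsum_eq,
      tsum_eq_sum hzero]
    have hsum2 : ∑ z ∈ range (m+1),
        ((((m:ℝ)+1) - ((min z (m+1) : ℕ) : ℝ)) * (((m+z).choose z : ℝ) * (1/2)^(m+1+z)))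
        = ((m:ℝ)+1) * ((2*m+2).choose (m+1) : ℝ) / 4^(m+1) := by
      rw [← idD m]
      refine Finset.sum_congr rfl fun z hz => ?_
      rw [Finset.mem_range] at hz
      rw [min_eq_left (by omega)]
      push_cast
      ring
    rw [hsum2, show 2*(m+1) = 2*m+2 by ring]
    push_cast
    ring
  · -- summability of norms
    apply Summable.congr hsumV
    intro z
    rw [← integral_piece m z]
    refine (MeasureTheory.setIntegral_congr_fun measurableSet_Ioi fun y hy => ?_).symm
    have hy0 : (0:ℝ) < y := hy
    exact Real.norm_of_nonneg (by positivity)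
end
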